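/- arXiv:1004.2269 — 14 statements merged into one kernel-verified Lean document; each statement's English description precedes it below -/
import Mathlib

section
/- For every positive integer n, the product ∏_{r=1}^{n} f(r) is an integer (i.e., there exists a positive integer N with ∏_{r=1}^{n} f(r) = N). -/
open Finset

/-- `g x = x` if `x` is an integer (for positive rationals: a positive integer), else `1`. -/
def g (x : ℚ) : ℚ := if x.den = 1 then x else 1

/-- `h r = r / (g(r/2) * g(r/4) * g(r/8) * ...)`; the product is finite since
`g (r / 2^i) = 1` for all `i > r`. -/
def h (r : ℕ) : ℚ := (r : ℚ) / ∏ i ∈ Finset.Icc 1 r, g ((r : ℚ) / 2 ^ i)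

/-- `f (2^k * ℓ) = ℓ^(1-k)` for `ℓ` odd, i.e. `f r = odd(r) ^ (1 - v₂(r))`. -/
def f (r : ℕ) : ℚ := (ordCompl[2] r : ℚ) ^ ((1 : ℤ) - padicValNat 2 r)

open Nat in
private lemma sum_div_two_pow_le (k n : ℕ) : ∑ i ∈ range k, n / 2 ^ (i + 1) ≤ n := by
  induction k generalizing n with
  | zero => simp
  | succ k ih =>
    rw [Finset.sum_range_succ']
    have h1 : ∀ i : ℕ, n / 2 ^ (i + 1 + 1) = (n / 2) / 2 ^ (i + 1) := fun i => by
      rw [Nat.div_div_eq_div_mul, pow_succ, mul_comm]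
    simp only [h1, pow_one]
    calc (∑ i ∈ range k, n / 2 / 2 ^ (i + 1)) + n / 2 ≤ n / 2 + n / 2 :=
          Nat.add_le_add_right (ih (n / 2)) _
      _ ≤ n := by omega

private lemma sum_Icc_one_eq {M : Type*} [AddCommMonoid M] (F : ℕ → M) (k : ℕ) :
    ∑ i ∈ Icc 1 k, F i = ∑ i ∈ range k, F (i + 1) := by
  induction k with
  | zero => simp
  | succ k ih => rw [Finset.sum_Icc_succ_top (by omega), ih, Finset.sum_range_succ]

open Nat in
private lemma prod_fact_dvd (n : ℕ) : (∏ i ∈ Icc 1 n, (n / 2 ^ i)!) ∣ n ! :=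
  (Nat.prod_factorial_dvd_factorial_sum _ _).trans
    (Nat.factorial_dvd_factorial (by rw [sum_Icc_one_eq]; exact sum_div_two_pow_le n n))

private lemma ordCompl_prod {α : Type*} (s : Finset α) (G : α → ℕ) :
    ordCompl[2] (∏ i ∈ s, G i) = ∏ i ∈ s, ordCompl[2] (G i) := by
  induction s using Finset.cons_induction with
  | empty => simp
  | cons a s ha ih => rw [prod_cons, prod_cons, Nat.ordCompl_mul, ih]

private lemma ordCompl_div_pow {m i : ℕ} (hm : m ≠ 0) (h : 2 ^ i ∣ m) :
    ordCompl[2] (m / 2 ^ i) = ordCompl[2] m := by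
  have hi : i ≤ m.factorization 2 :=
    (Nat.Prime.pow_dvd_iff_le_factorization Nat.prime_two hm).mp h
  have hfac : (m / 2 ^ i).factorization 2 = m.factorization 2 - i := by
    rw [Nat.factorization_div h, Finsupp.tsub_apply, Nat.Prime.factorization_pow Nat.prime_two,
      Finsupp.single_eq_same]
  rw [hfac, Nat.div_div_eq_div_mul, ← pow_add, Nat.add_sub_cancel' hi]

private lemma f_eq (r : ℕ) (hr : r ≠ 0) :
    f r = ((ordCompl[2] r : ℕ) : ℚ) * (((ordCompl[2] r : ℕ) : ℚ) ^ padicValNat 2 r)⁻¹ := by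
  have h1 : ((r : ℚ) / 2 ^ (r.factorization 2) : ℚ) = ((ordCompl[2] r : ℕ) : ℚ) := by
    rw [Nat.cast_div (Nat.ordProj_dvd r 2) (by positivity)]
    push_cast
    ring
  have h2 : ((ordCompl[2] r : ℕ) : ℚ) ≠ 0 := by
    exact_mod_cast (Nat.ordCompl_pos 2 hr).ne'
  simp only [f]
  rw [h1, zpow_sub₀ h2, zpow_one, zpow_natCast]
  ring

open Nat in
private lemma key_prod (n : ℕ) :
    (∏ r ∈ Icc 1 n, f r) * ∏ i ∈ Icc 1 n, ((ordCompl[2] ((n / 2 ^ i)!) : ℕ) : ℚ)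
      = ((ordCompl[2] (n !) : ℕ) : ℚ) := by
  induction n with
  | zero => simp
  | succ n ih =>
    set v := (n + 1).factorization 2 with hv
    set ℓ := ordCompl[2] (n + 1) with hℓ
    have hn1 : n + 1 ≠ 0 := n.succ_ne_zero
    have hℓpos : 0 < ℓ := Nat.ordCompl_pos 2 hn1
    have hℓQ : (ℓ : ℚ) ≠ 0 := by exact_mod_cast hℓpos.ne'
    have hv_le : v ≤ n + 1 :=
      le_trans (Nat.lt_two_pow_self (n := v)).le (Nat.le_of_dvd (Nat.succ_pos n) (Nat.ordProj_dvd _ _))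
    have hterm : ∀ i ∈ Icc 1 (n + 1), ordCompl[2] (((n + 1) / 2 ^ i)!)
        = ordCompl[2] ((n / 2 ^ i)!) * (if 2 ^ i ∣ n + 1 then ℓ else 1) := by
      intro i _
      by_cases h : 2 ^ i ∣ n + 1
      · have h2 : (n + 1) / 2 ^ i = n / 2 ^ i + 1 := by rw [Nat.succ_div, if_pos h]
        rw [if_pos h, h2, Nat.factorial_succ, Nat.ordCompl_mul, ← h2,
          ordCompl_div_pow hn1 h, mul_comm, hℓ]
      · rw [if_neg h, mul_one, Nat.succ_div, if_neg h, add_zero]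
    have hfilter : (Icc 1 (n + 1)).filter (fun i => 2 ^ i ∣ n + 1) = Icc 1 v := by
      ext i
      simp only [Finset.mem_filter, Finset.mem_Icc,
        Nat.Prime.pow_dvd_iff_le_factorization Nat.prime_two hn1, ← hv]
      omega
    have hprod : ∏ i ∈ Icc 1 (n + 1), ordCompl[2] (((n + 1) / 2 ^ i)!)
        = (∏ i ∈ Icc 1 n, ordCompl[2] ((n / 2 ^ i)!)) * ℓ ^ v := by
      rw [Finset.prod_congr rfl hterm, Finset.prod_mul_distrib]
      congr 1
      · rw [Finset.prod_Icc_succ_top (by omega : 1 ≤ n + 1),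
          Nat.div_eq_of_lt (lt_of_lt_of_le (Nat.lt_two_pow_self (n := n))
            (Nat.pow_le_pow_right (by omega) (by omega)))]
        simp
      · rw [Finset.prod_ite, Finset.prod_const, Finset.prod_const_one, mul_one, hfilter,
          Nat.card_Icc]
        simp
    have hp : padicValNat 2 (n + 1) = v := (Nat.factorization_def (n + 1) Nat.prime_two).symm
    have hf : f (n + 1) = (ℓ : ℚ) * ((ℓ : ℚ) ^ v)⁻¹ := by
      rw [f_eq (n + 1) hn1, hp, ← hℓ]
    have hRHS : ordCompl[2] ((n + 1)!) = ℓ * ordCompl[2] (n !) := by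
      rw [Nat.factorial_succ, Nat.ordCompl_mul, hℓ]
    have hprodQ : (∏ i ∈ Icc 1 (n + 1), ((ordCompl[2] (((n + 1) / 2 ^ i)!) : ℕ) : ℚ))
        = (∏ i ∈ Icc 1 n, ((ordCompl[2] ((n / 2 ^ i)!) : ℕ) : ℚ)) * (ℓ : ℚ) ^ v := by
      exact_mod_cast congrArg (Nat.cast (R := ℚ)) hprod
    rw [Finset.prod_Icc_succ_top (by omega : 1 ≤ n + 1), hprodQ, hf, hRHS]
    push_cast
    rw [← ih]
    field_simp

theorem prod_f_is_integer (n : ℕ) (hn : 0 < n) :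
    ∃ N : ℕ, 0 < N ∧ ∏ r ∈ Finset.Icc 1 n, f r = (N : ℚ) := by
  have hdvd : (∏ i ∈ Icc 1 n, ordCompl[2] ((n / 2 ^ i).factorial)) ∣ ordCompl[2] n.factorial := by
    rw [← ordCompl_prod]
    exact Nat.ordCompl_dvd_ordCompl_of_dvd (prod_fact_dvd n) 2
  obtain ⟨c, hc⟩ := hdvd
  have hD : 0 < ∏ i ∈ Icc 1 n, ordCompl[2] ((n / 2 ^ i).factorial) :=
    Finset.prod_pos fun i _ => Nat.ordCompl_pos 2 (Nat.factorial_pos _).ne'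
  have hN : 0 < ordCompl[2] n.factorial := Nat.ordCompl_pos 2 (Nat.factorial_pos n).ne'
  have hcpos : 0 < c := by
    rcases Nat.eq_zero_or_pos c with h | h
    · rw [h, mul_zero] at hc; omega
    · exact h
  refine ⟨c, hcpos, ?_⟩
  have hk := key_prod n
  rw [hc] at hk
  push_cast at hk
  have hDQ : (∏ i ∈ Icc 1 n, ((ordCompl[2] ((n / 2 ^ i).factorial) : ℕ) : ℚ)) ≠ 0 := by
    rw [← Nat.cast_prod]
    exact_mod_cast hD.ne'
  apply mul_right_cancel₀ hDQ
  rw [hk]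
  ring
end

section
/- For every positive integer n, the integer ∏_{r=1}^{n} f(r) is a multiple of odd(lcm(1, 2, …, n)), the odd part of the least common multiple of 1, 2, …, n. -/
open Finset

lemma sum_div_two_pow : ∀ m, 1 ≤ m → ∀ B, (∑ i ∈ Finset.range B, m / 2 ^ (i + 1)) + 1 ≤ m := by
  intro m
  induction m using Nat.strong_induction_on with
  | _ m ih =>
    intro hm B
    cases B with
    | zero => simpa using hm
    | succ B =>
      rw [Finset.sum_range_succ']
      have h2 : ∀ i, m / 2 ^ (i + 1 + 1) = (m / 2) / 2 ^ (i + 1) := by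
        intro i
        rw [Nat.div_div_eq_div_mul]
        ring_nf
      rw [Finset.sum_congr rfl fun i _ => h2 i]
      rcases Nat.lt_or_ge m 2 with h | h
      · interval_cases m
        · simpa using (Nat.zero_le _)
      · have h1 : 1 ≤ m / 2 := by omega
        have := ih (m / 2) (by omega) h1 B
        simp only [pow_succ] at *
        omega

lemma count_dvd (n d : ℕ) : (∑ r ∈ Finset.Icc 1 n, if d ∣ r then 1 else 0) = n / d := by
  rw [← Finset.card_filter]
  have : Finset.Icc 1 n = Finset.Ioc 0 n := by ext j; simp; omega
  rw [this]
  exact Nat.Ioc_filter_dvd_card_eq_div n d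

lemma count_le (n K : ℕ) (h : K ≤ n) : (∑ j ∈ Finset.Icc 1 n, if j ≤ K then 1 else 0) = K := by
  rw [← Finset.card_filter]
  have : (Finset.Icc 1 n).filter (· ≤ K) = Finset.Icc 1 K := by
    ext j; simp only [Finset.mem_filter, Finset.mem_Icc]; omega
  rw [this, Nat.card_Icc]; omega

lemma fact_eq_sum {p n r : ℕ} (hp : p.Prime) (hr : r ∈ Finset.Icc 1 n) :
    r.factorization p = ∑ j ∈ Finset.Icc 1 n, if p ^ j ∣ r then 1 else 0 := by
  rw [Finset.mem_Icc] at hr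
  have hr0 : r ≠ 0 := by omega
  have h1 : ∀ j, (p ^ j ∣ r) = (j ≤ r.factorization p) := fun j =>
    propext (Nat.Prime.pow_dvd_iff_le_factorization hp hr0)
  simp only [h1]
  rw [count_le n _ (le_trans (Nat.factorization_lt p hr0).le (by omega))]

lemma S1 {p : ℕ} (hp : p.Prime) (n : ℕ) :
    ∑ r ∈ Finset.Icc 1 n, r.factorization p = ∑ j ∈ Finset.Icc 1 n, n / p ^ j := by
  rw [Finset.sum_congr rfl fun r hr => fact_eq_sum hp hr, Finset.sum_comm]
  exact Finset.sum_congr rfl fun j _ => count_dvd n (p ^ j)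

lemma S2 {p : ℕ} (hp : p.Prime) (hp2 : p ≠ 2) (n : ℕ) :
    ∑ r ∈ Finset.Icc 1 n, (r.factorization 2) * (r.factorization p)
      = ∑ i ∈ Finset.Icc 1 n, ∑ j ∈ Finset.Icc 1 n, n / (2 ^ i * p ^ j) := by
  have key : ∀ r ∈ Finset.Icc 1 n, (r.factorization 2) * (r.factorization p)
      = ∑ i ∈ Finset.Icc 1 n, ∑ j ∈ Finset.Icc 1 n, if 2 ^ i * p ^ j ∣ r then 1 else 0 := by
    intro r hr
    rw [fact_eq_sum Nat.prime_two hr, fact_eq_sum hp hr, Finset.sum_mul_sum]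
    refine Finset.sum_congr rfl fun i _ => Finset.sum_congr rfl fun j _ => ?_
    have hcop : Nat.Coprime (2 ^ i) (p ^ j) :=
      Nat.Coprime.pow i j ((Nat.coprime_primes Nat.prime_two hp).mpr (Ne.symm hp2))
    have : (2 ^ i * p ^ j ∣ r) ↔ (2 ^ i ∣ r ∧ p ^ j ∣ r) := by
      constructor
      · intro h; exact ⟨dvd_trans (dvd_mul_right _ _) h, dvd_trans (dvd_mul_left _ _) h⟩
      · rintro ⟨h1, h2⟩; exact hcop.mul_dvd_of_dvd_of_dvd h1 h2
    split_ifs with h1 h2 h2 <;> simp_all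
  rw [Finset.sum_congr rfl key, Finset.sum_comm]
  refine Finset.sum_congr rfl fun i _ => ?_
  rw [Finset.sum_comm]
  exact Finset.sum_congr rfl fun j _ => count_dvd n _

lemma sum_Icc_div (m B : ℕ) (hm : 1 ≤ m) : (∑ i ∈ Finset.Icc 1 B, m / 2 ^ i) + 1 ≤ m := by
  have : Finset.Icc 1 B = Finset.Ico 1 (B + 1) := by ext x; simp
  rw [this, Finset.sum_Ico_eq_sum_range]
  have : ∀ i, m / 2 ^ (1 + i) = m / 2 ^ (i + 1) := by intro i; rw [add_comm]
  rw [Finset.sum_congr rfl fun i _ => this i]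
  exact sum_div_two_pow m hm _

lemma core {p : ℕ} (hp : p.Prime) (hp2 : p ≠ 2) (n : ℕ) (hn : 0 < n) :
    Nat.log p n + ∑ r ∈ Finset.Icc 1 n, (r.factorization 2) * (r.factorization p)
      ≤ ∑ r ∈ Finset.Icc 1 n, r.factorization p := by
  rw [S1 hp, S2 hp hp2, Finset.sum_comm]
  have hlog : Nat.log p n = ∑ j ∈ Finset.Icc 1 n, if p ^ j ≤ n then 1 else 0 := by
    have h1 : ∀ j, (p ^ j ≤ n) = (j ≤ Nat.log p n) := fun j =>
      propext (Nat.le_log_iff_pow_le hp.one_lt hn.ne').symm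
    simp only [h1]
    rw [count_le n _ (Nat.log_le_self p n)]
  rw [hlog, ← Finset.sum_add_distrib]
  refine Finset.sum_le_sum fun j _ => ?_
  have hdd : ∀ i, n / (2 ^ i * p ^ j) = (n / p ^ j) / 2 ^ i := by
    intro i; rw [Nat.div_div_eq_div_mul, mul_comm]
  rw [Finset.sum_congr rfl fun i _ => hdd i]
  split_ifs with h
  · have hm : 1 ≤ n / p ^ j := (Nat.one_le_div_iff (pow_pos hp.pos j)).mpr h
    have := sum_Icc_div (n / p ^ j) n hm
    omega
  · have : n / p ^ j = 0 := Nat.div_eq_of_lt (by omega)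
    simp [this]

lemma lcm_aux (n : ℕ) : ∀ s : Finset ℕ, (∀ r ∈ s, 1 ≤ r ∧ r ≤ n) →
    s.lcm id ≠ 0 ∧ ∀ p : ℕ, p.Prime → (s.lcm id).factorization p ≤ Nat.log p n := by
  intro s
  induction s using Finset.induction_on with
  | empty => intro _; simp
  | @insert a s hx ih =>
    intro hmem
    obtain ⟨hs0, hsp⟩ := ih fun r hr => hmem r (Finset.mem_insert_of_mem hr)
    have ha := hmem a (Finset.mem_insert_self a s)
    have ha0 : a ≠ 0 := by omega
    rw [Finset.lcm_insert, lcm_eq_nat_lcm]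
    refine ⟨Nat.lcm_ne_zero ha0 hs0, fun p pp => ?_⟩
    simp only [id_eq]
    rw [Nat.factorization_lcm ha0 hs0, Finsupp.sup_apply, sup_le_iff]
    constructor
    · have hd : p ^ a.factorization p ∣ a := Nat.ordProj_dvd a p
      have hle : p ^ a.factorization p ≤ n := le_trans (Nat.le_of_dvd (by omega) hd) ha.2
      have hn0 : n ≠ 0 := by omega
      exact (Nat.le_log_iff_pow_le pp.one_lt hn0).mpr hle
    · exact hsp p pp

lemma tri1 (a v : ℕ) : (a - 1) * v + min a 1 * v = a * v := by
  cases a with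
  | zero => simp
  | succ k =>
    have h1 : min (k + 1) 1 = 1 := by omega
    rw [h1, Nat.succ_sub_one, one_mul, Nat.succ_mul]

lemma tri2 (a v : ℕ) : (1 - a) * v + min a 1 * v = v := by
  cases a with
  | zero => simp
  | succ k =>
    have h1 : min (k + 1) 1 = 1 := by omega
    have h2 : 1 - (k + 1) = 0 := by omega
    rw [h1, h2, one_mul, zero_mul, zero_add]

lemma f_eq_s1 {r : ℕ} (hr : r ≠ 0) :
    f r = ((ordCompl[2] r ^ (1 - r.factorization 2) : ℕ) : ℚ)
        / ((ordCompl[2] r ^ (r.factorization 2 - 1) : ℕ) : ℚ) := by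
  have hx : ((ordCompl[2] r : ℕ) : ℚ) ≠ 0 := by
    exact_mod_cast (Nat.ordCompl_pos 2 hr).ne'
  have hbase : ((r : ℚ) / 2 ^ r.factorization 2) = ((ordCompl[2] r : ℕ) : ℚ) := by
    rw [Nat.cast_div (Nat.ordProj_dvd r 2) (by positivity)]
    push_cast; ring
  rw [f, hbase, show ((1 : ℤ) - padicValNat 2 r) = 1 - (r.factorization 2 : ℤ) by
    rw [Nat.factorization_def r Nat.prime_two], Nat.cast_pow, Nat.cast_pow]
  set x : ℚ := ((ordCompl[2] r : ℕ) : ℚ) with hxdef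
  clear_value x
  generalize r.factorization 2 = A
  cases A with
  | zero => simp
  | succ k =>
    rw [show (1 : ℤ) - ((k + 1 : ℕ) : ℤ) = -(k : ℤ) by push_cast; ring,
      zpow_neg, zpow_natCast, Nat.succ_sub_one, show 1 - (k + 1) = 0 from by omega,
      pow_zero, one_div]

theorem odd_part_lcm_dvd_prod_f (n : ℕ) (hn : 0 < n) :
    ∃ m : ℕ, ∏ r ∈ Finset.Icc 1 n, f r
      = ((ordCompl[2] (Finset.lcm (Finset.Icc 1 n) id) : ℕ) : ℚ) * m := by
  set L : ℕ := Finset.lcm (Finset.Icc 1 n) id with hLdef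
  obtain ⟨hL0, hLlog⟩ := lcm_aux n (Finset.Icc 1 n)
    (fun r hr => by rw [Finset.mem_Icc] at hr; omega)
  set oddL : ℕ := ordCompl[2] L with hoddLdef
  have hoddL0 : oddL ≠ 0 := (Nat.ordCompl_pos 2 hL0).ne'
  have hrne : ∀ r ∈ Finset.Icc 1 n, r ≠ 0 := by
    intro r hr; rw [Finset.mem_Icc] at hr; omega
  set N : ℕ := ∏ r ∈ Finset.Icc 1 n, ordCompl[2] r ^ (1 - r.factorization 2) with hNdef
  set D : ℕ := ∏ r ∈ Finset.Icc 1 n, ordCompl[2] r ^ (r.factorization 2 - 1) with hDdef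
  have hN0 : N ≠ 0 := Finset.prod_ne_zero_iff.mpr
    (fun r hr => pow_ne_zero _ (Nat.ordCompl_pos 2 (hrne r hr)).ne')
  have hD0 : D ≠ 0 := Finset.prod_ne_zero_iff.mpr
    (fun r hr => pow_ne_zero _ (Nat.ordCompl_pos 2 (hrne r hr)).ne')
  have hprod : ∏ r ∈ Finset.Icc 1 n, f r = (N : ℚ) / (D : ℚ) := by
    rw [Finset.prod_congr rfl (fun r hr => f_eq_s1 (hrne r hr)), Finset.prod_div_distrib,
      hNdef, hDdef]
    push_cast
    ring
  -- the key divisibility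
  have hdvd : D * oddL ∣ N := by
    rw [← Nat.factorization_le_iff_dvd (mul_ne_zero hD0 hoddL0) hN0, Finsupp.le_def]
    intro p
    by_cases pp : p.Prime
    · rw [Nat.factorization_mul hD0 hoddL0, Finsupp.add_apply]
      have hNp : N.factorization p
          = ∑ r ∈ Finset.Icc 1 n, (1 - r.factorization 2) * ((ordCompl[2] r).factorization p) := by
        rw [hNdef, Nat.factorization_prod
          (fun r hr => pow_ne_zero _ (Nat.ordCompl_pos 2 (hrne r hr)).ne'),
          Finset.sum_apply']
        exact Finset.sum_congr rfl fun r _ => by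
          rw [Nat.factorization_pow, Finsupp.smul_apply, smul_eq_mul]
      have hDp : D.factorization p
          = ∑ r ∈ Finset.Icc 1 n, (r.factorization 2 - 1) * ((ordCompl[2] r).factorization p) := by
        rw [hDdef, Nat.factorization_prod
          (fun r hr => pow_ne_zero _ (Nat.ordCompl_pos 2 (hrne r hr)).ne'),
          Finset.sum_apply']
        exact Finset.sum_congr rfl fun r _ => by
          rw [Nat.factorization_pow, Finsupp.smul_apply, smul_eq_mul]
      rw [hNp, hDp]
      by_cases hp2 : p = 2
      · subst hp2
        have hw : ∀ r : ℕ, (ordCompl[2] r).factorization 2 = 0 := by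
          intro r; rw [Nat.factorization_ordCompl, Finsupp.erase_same]
        simp [hw, hoddLdef]
      · have hw : ∀ r : ℕ, (ordCompl[2] r).factorization p = r.factorization p := by
          intro r; rw [Nat.factorization_ordCompl, Finsupp.erase_ne hp2]
        simp only [hw]
        have hLp : L.factorization p ≤ Nat.log p n := by
          rw [hLdef]
          exact hLlog p pp
        have hcore := core pp hp2 n hn
        have e1 : (∑ r ∈ Finset.Icc 1 n, (r.factorization 2 - 1) * r.factorization p)
            + (∑ r ∈ Finset.Icc 1 n, min (r.factorization 2) 1 * r.factorization p)
            = ∑ r ∈ Finset.Icc 1 n, (r.factorization 2) * (r.factorization p) := by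
          rw [← Finset.sum_add_distrib]
          exact Finset.sum_congr rfl fun r _ => tri1 _ _
        have e2 : (∑ r ∈ Finset.Icc 1 n, (1 - r.factorization 2) * r.factorization p)
            + (∑ r ∈ Finset.Icc 1 n, min (r.factorization 2) 1 * r.factorization p)
            = ∑ r ∈ Finset.Icc 1 n, r.factorization p := by
          rw [← Finset.sum_add_distrib]
          exact Finset.sum_congr rfl fun r _ => tri2 _ _
        have hoL : oddL.factorization p = L.factorization p := hw L
        omega
    · rw [Nat.factorization_eq_zero_of_not_prime _ pp]
      exact Nat.zero_le _
  obtain ⟨m, hm⟩ := hdvd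
  refine ⟨m, ?_⟩
  rw [hprod, hm]
  have hDQ : (D : ℚ) ≠ 0 := by exact_mod_cast hD0
  push_cast
  field_simp
end

section
/- For every positive integer n and every odd prime p with p ≤ n, the prime p divides the integer ∏_{r=1}^{n} f(r). -/
open Finset

lemma sum_shift (M b : ℕ) :
    ∑ i ∈ Icc 1 (b+1), M / 2^i = M/2 + ∑ i ∈ Icc 1 b, (M/2)/2^i := by
  rw [← Finset.Ico_add_one_right_eq_Icc, Finset.sum_Ico_eq_sum_range]
  have h1 : b + 1 + 1 - 1 = b + 1 := by omega
  rw [h1, Finset.sum_range_succ']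
  have h2 : ∀ i : ℕ, M / 2 ^ (1 + (i+1)) = (M/2) / 2^(1+i) := by
    intro i
    rw [Nat.div_div_eq_div_mul, ← pow_succ']
    ring_nf
  simp only [h2, pow_one]
  rw [add_comm, ← Finset.Ico_add_one_right_eq_Icc, Finset.sum_Ico_eq_sum_range]
  congr 1

lemma key_ineq (m : ℕ) : ∀ b : ℕ,
    (∑ i ∈ Icc 1 b, m / 2^i ≤ m) ∧ (1 ≤ m → ∑ i ∈ Icc 1 b, m / 2^i + 1 ≤ m) := by
  induction m using Nat.strong_induction_on with
  | _ m ih =>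
    intro b
    match b with
    | 0 => simp
    | b + 1 =>
      rcases Nat.eq_zero_or_pos m with rfl | hm
      · simp
      · have ihm := ih (m/2) (by omega) b
        rw [sum_shift]
        omega

lemma prod_ordCompl (m : ℕ) :
    ∏ r ∈ Icc 1 m, ordCompl[2] r = ordCompl[2] m.factorial := by
  induction m with
  | zero => simp
  | succ m ih =>
    rw [← Finset.Ico_add_one_right_eq_Icc] at *
    rw [Finset.prod_Ico_succ_top (by omega), ih, Nat.factorial_succ, Nat.ordCompl_mul, mul_comm]

lemma ordCompl_two_pow_mul (i s : ℕ) : ordCompl[2] (2^i * s) = ordCompl[2] s := by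
  rw [Nat.ordCompl_mul]
  have : ordCompl[2] (2^i) = 1 := by
    simp [Nat.Prime.factorization_self Nat.prime_two]
  rw [this, one_mul]

lemma reindex (n i : ℕ) :
    ∏ r ∈ (Icc 1 n).filter (fun r => 2^i ∣ r), ordCompl[2] r
      = ∏ s ∈ Icc 1 (n / 2^i), ordCompl[2] s := by
  have h2 : 0 < 2^i := pow_pos (by norm_num) i
  refine (Finset.prod_nbij' (fun r => r / 2^i) (fun s => 2^i * s) ?_ ?_ ?_ ?_ ?_).symm.symm
  · intro r hr
    simp only [mem_filter, mem_Icc] at hr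
    obtain ⟨⟨h1, hn'⟩, hd⟩ := hr
    simp only [mem_Icc]
    constructor
    · exact Nat.one_le_div_iff h2 |>.mpr (Nat.le_of_dvd (by omega) hd)
    · exact Nat.div_le_div_right hn'
  · intro s hs
    simp only [mem_Icc] at hs
    simp only [mem_filter, mem_Icc]
    refine ⟨⟨by nlinarith [hs.1], ?_⟩, Dvd.intro _ rfl⟩
    exact (Nat.le_div_iff_mul_le h2).mp hs.2 |>.trans_eq' (mul_comm _ _).symm
  · intro r hr
    simp only [mem_filter] at hr
    exact (Nat.mul_div_cancel' hr.2)
  · intro s _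
    exact Nat.mul_div_cancel_left s h2
  · intro r hr
    simp only [mem_filter] at hr
    obtain ⟨c, rfl⟩ := hr.2
    rw [Nat.mul_div_cancel_left c h2, ordCompl_two_pow_mul]

lemma denom_eq (n : ℕ) :
    ∏ r ∈ Icc 1 n, (ordCompl[2] r) ^ (padicValNat 2 r)
      = ∏ i ∈ Icc 1 n, ordCompl[2] ((n / 2^i).factorial) := by
  have step : ∀ r ∈ Icc 1 n, (ordCompl[2] r) ^ (padicValNat 2 r)
      = ∏ i ∈ Icc 1 n, (if 2^i ∣ r then ordCompl[2] r else 1) := by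
    intro r hr
    simp only [mem_Icc] at hr
    have hr0 : r ≠ 0 := by omega
    have hfd : r.factorization 2 = padicValNat 2 r := Nat.factorization_def r Nat.prime_two
    have hv : padicValNat 2 r ≤ n :=
      le_trans (padicValNat_le_nat_log r) (le_trans (Nat.log_le_self 2 r) hr.2)
    rw [← Finset.prod_filter]
    have hfil : (Icc 1 n).filter (fun i => 2^i ∣ r) = Icc 1 (padicValNat 2 r) := by
      ext i
      simp only [mem_filter, mem_Icc]
      rw [Nat.Prime.pow_dvd_iff_le_factorization Nat.prime_two hr0, hfd]
      omega
    rw [hfil, Finset.prod_const, Nat.card_Icc]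
    norm_num
  rw [Finset.prod_congr rfl step, Finset.prod_comm]
  refine Finset.prod_congr rfl fun i _ => ?_
  rw [← Finset.prod_filter, reindex, prod_ordCompl]

lemma prod_f_eq (n : ℕ) :
    ∏ r ∈ Icc 1 n, f r
      = ((ordCompl[2] n.factorial : ℕ) : ℚ)
        / ((∏ i ∈ Icc 1 n, ordCompl[2] ((n / 2^i).factorial) : ℕ) : ℚ) := by
  have hf : ∀ r ∈ Icc 1 n, f r
      = ((ordCompl[2] r : ℕ) : ℚ) / (((ordCompl[2] r : ℕ) : ℚ)) ^ (padicValNat 2 r) := by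
    intro r hr
    simp only [mem_Icc] at hr
    have hr0 : r ≠ 0 := by omega
    have hcast : ((ordCompl[2] r : ℕ) : ℚ) = (r : ℚ) / 2 ^ r.factorization 2 := by
      rw [Nat.cast_div (Nat.ordProj_dvd r 2) (by positivity)]
      push_cast
      ring
    have hL : ((ordCompl[2] r : ℕ) : ℚ) ≠ 0 :=
      Nat.cast_ne_zero.mpr (Nat.ordCompl_pos 2 hr0).ne'
    unfold f
    rw [← hcast, zpow_sub₀ hL, zpow_one, zpow_natCast]
  rw [Finset.prod_congr rfl hf, Finset.prod_div_distrib]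
  congr 1
  · rw [← Nat.cast_prod, prod_ordCompl]
  · rw [← denom_eq]
    push_cast
    ring

lemma dvd_main (n p : ℕ) (hn : 0 < n) (hp : p.Prime) (hp2 : p ≠ 2) (hpn : p ≤ n) :
    p * ∏ i ∈ Icc 1 n, ordCompl[2] ((n / 2^i).factorial) ∣ ordCompl[2] n.factorial := by
  have hterm : ∀ i : ℕ, ordCompl[2] ((n / 2^i).factorial) ≠ 0 :=
    fun i => (Nat.ordCompl_pos 2 (Nat.factorial_pos _).ne').ne'
  have hB0 : ∏ i ∈ Icc 1 n, ordCompl[2] ((n / 2^i).factorial) ≠ 0 :=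
    Finset.prod_ne_zero_iff.mpr fun i _ => hterm i
  have hpB0 : p * ∏ i ∈ Icc 1 n, ordCompl[2] ((n / 2^i).factorial) ≠ 0 :=
    mul_ne_zero hp.ne_zero hB0
  have hA0 : ordCompl[2] n.factorial ≠ 0 := (Nat.ordCompl_pos 2 (Nat.factorial_pos _).ne').ne'
  rw [← Nat.factorization_le_iff_dvd hpB0 hA0, Finsupp.le_def]
  intro q
  rw [Nat.factorization_mul hp.ne_zero hB0, Nat.factorization_prod (fun i _ => hterm i),
    Nat.factorization_ordCompl]
  simp only [Finsupp.coe_add, Pi.add_apply, Finsupp.coe_finset_sum, Finset.sum_apply,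
    Nat.factorization_ordCompl]
  by_cases hq2 : q = 2
  · subst hq2
    simp only [Finsupp.erase_same]
    have : p.factorization 2 = 0 := by
      rw [hp.factorization, Finsupp.single_apply, if_neg (by omega)]
    simp [this]
  · simp only [Finsupp.erase_ne hq2]
    by_cases hq : q.Prime
    · haveI := Fact.mk hq
      have hleg : ∀ m : ℕ, m ≤ n → m.factorial.factorization q = ∑ j ∈ Ico 1 (n+1), m / q^j := by
        intro m hm
        rw [Nat.factorization_def _ hq, padicValNat_factorial (p := q) (n := m) (b := n+1)
          (lt_of_le_of_lt ((Nat.log_le_self q m).trans hm) (Nat.lt_succ_self n))]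
      rw [hleg n le_rfl]
      have hps : p.factorization q = if p = q then 1 else 0 := by
        rw [hp.factorization, Finsupp.single_apply]
      rw [hps]
      have hterms : ∀ i ∈ Icc 1 n, (n / 2^i).factorial.factorization q
          = ∑ j ∈ Ico 1 (n+1), (n / q^j) / 2^i := by
        intro i _
        rw [hleg (n / 2^i) (Nat.div_le_self _ _)]
        refine Finset.sum_congr rfl fun j _ => ?_
        rw [Nat.div_div_eq_div_mul, Nat.div_div_eq_div_mul, mul_comm]
      rw [Finset.sum_congr rfl hterms, Finset.sum_comm]
      by_cases hqp : p = q
      · subst hqp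
        rw [if_pos rfl]
        have h1mem : (1:ℕ) ∈ Ico 1 (n+1) := by simp [hn]
        rw [← Finset.sum_erase_add _ _ h1mem, ← Finset.sum_erase_add _ _ h1mem]
        have hfirst : ∑ i ∈ Icc 1 n, (n / p^1) / 2^i + 1 ≤ n / p^1 := by
          refine (key_ineq _ _).2 ?_
          rw [pow_one]
          exact (Nat.one_le_div_iff hp.pos).mpr hpn
        have hrest : ∑ j ∈ (Ico 1 (n+1)).erase 1, ∑ i ∈ Icc 1 n, (n / p^j) / 2^i
            ≤ ∑ j ∈ (Ico 1 (n+1)).erase 1, n / p^j :=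
          Finset.sum_le_sum fun j _ => (key_ineq _ _).1
        omega
      · rw [if_neg hqp, zero_add]
        exact Finset.sum_le_sum fun j _ => (key_ineq _ _).1
    · have h1 : p.factorization q = 0 := by
        rw [hp.factorization, Finsupp.single_apply, if_neg (fun h : p = q => hq (h ▸ hp))]
      have h2 : ∀ m : ℕ, m.factorial.factorization q = 0 :=
        fun m => Nat.factorization_eq_zero_of_not_prime _ hq
      simp [h1, h2]

theorem odd_prime_dvd_prod_f (n p : ℕ) (hn : 0 < n) (hp : p.Prime) (hodd : Odd p)
    (hpn : p ≤ n) :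
    ∃ m : ℕ, ∏ r ∈ Finset.Icc 1 n, f r = (p : ℚ) * m := by
  have hp2 : p ≠ 2 := by rintro rfl; exact (Nat.not_odd_iff_even.mpr even_two) hodd
  obtain ⟨m, hm⟩ := dvd_main n p hn hp hp2 hpn
  refine ⟨m, ?_⟩
  have hBpos : 0 < ∏ i ∈ Icc 1 n, ordCompl[2] ((n / 2^i).factorial) :=
    Finset.prod_pos fun i _ => Nat.ordCompl_pos 2 (Nat.factorial_pos _).ne'
  have hB0 : ((∏ i ∈ Icc 1 n, ordCompl[2] ((n / 2^i).factorial) : ℕ) : ℚ) ≠ 0 :=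
    Nat.cast_ne_zero.mpr hBpos.ne'
  rw [prod_f_eq, hm, Nat.cast_mul, Nat.cast_mul, mul_right_comm, mul_div_assoc,
    div_self hB0, mul_one]
end

section
/- For every positive integer r, f(r) = 2^{v₂(r)(v₂(r)−3)/2} · h(r), where the power of 2 is taken in the positive rationals (the exponent v₂(r)(v₂(r)−3)/2 is an integer, possibly negative). -/
open Finset

lemma den_eq_one_iff (a b : ℕ) (hb : b ≠ 0) : ((a : ℚ) / (b : ℚ)).den = 1 ↔ b ∣ a := by
  constructor
  · intro hd
    have hq : ((a : ℚ) / b) = (((a : ℚ) / b).num : ℚ) := by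
      conv_lhs => rw [← Rat.num_div_den ((a : ℚ)/b), hd]
      simp
    have hb' : (b : ℚ) ≠ 0 := Nat.cast_ne_zero.mpr hb
    have : (a : ℚ) = (((a : ℚ)/b).num : ℚ) * b := by
      field_simp at hq ⊢
      linarith [hq]
    have h2 : (a : ℤ) = ((a : ℚ)/b).num * b := by exact_mod_cast this
    have : (b : ℤ) ∣ (a : ℤ) := ⟨((a : ℚ)/b).num, by linarith [h2]⟩
    exact_mod_cast this
  · rintro ⟨c, rfl⟩
    have hb' : (b : ℚ) ≠ 0 := Nat.cast_ne_zero.mpr hb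
    have : ((b * c : ℕ) : ℚ) / b = (c : ℚ) := by push_cast; field_simp
    rw [this]
    exact Rat.den_natCast c

theorem f_eq_two_zpow_mul_h (r : ℕ) (hr : 0 < r) :
    f r = (2 : ℚ) ^ (((padicValNat 2 r : ℤ) * ((padicValNat 2 r : ℤ) - 3)) / 2) * h r := by
  set k := padicValNat 2 r with hk
  set l := ordCompl[2] r with hl
  have hrfact : 2 ^ k * l = r := Nat.ordProj_mul_ordCompl_eq_self r 2
  have hkr : k ≤ r := by
    have h1 : k < 2 ^ k := Nat.lt_two_pow_self
    have h2 : 2 ^ k ≤ r := Nat.le_of_dvd hr (Nat.ordProj_dvd r 2)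
    omega
  have hrne : (r : ℚ) ≠ 0 := Nat.cast_ne_zero.mpr hr.ne'
  have h2ne : (2 : ℚ) ≠ 0 := two_ne_zero
  -- compute the product
  have hprod : ∏ i ∈ Finset.Icc 1 r, g ((r : ℚ) / 2 ^ i)
      = (r : ℚ) ^ k / 2 ^ (∑ i ∈ Finset.Icc 1 k, i) := by
    have hsub : Finset.Icc 1 k ⊆ Finset.Icc 1 r := Finset.Icc_subset_Icc_right hkr
    rw [← Finset.prod_subset hsub ?_]
    · have : ∀ i ∈ Finset.Icc 1 k, g ((r : ℚ) / 2 ^ i) = (r : ℚ) / 2 ^ i := by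
        intro i hi
        simp only [Finset.mem_Icc] at hi
        have hdvd : 2 ^ i ∣ r := dvd_trans (pow_dvd_pow 2 hi.2) (Nat.ordProj_dvd r 2)
        have : ((r : ℚ) / ((2 ^ i : ℕ) : ℚ)).den = 1 := (den_eq_one_iff r (2 ^ i) (by positivity)).mpr hdvd
        rw [g]
        push_cast at this
        rw [if_pos this]
      rw [Finset.prod_congr rfl this, Finset.prod_div_distrib, Finset.prod_const,
        Nat.card_Icc, Finset.prod_pow_eq_pow_sum]
      simp
    · intro i hit his
      simp only [Finset.mem_Icc] at hit his
      have hik : k < i := by omega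
      have hndvd : ¬ (2 ^ i : ℕ) ∣ r := by
        intro hd
        have : 2 ^ (k + 1) ∣ r := dvd_trans (pow_dvd_pow 2 (by omega)) hd
        exact pow_succ_padicValNat_not_dvd hr.ne' this
      have : ((r : ℚ) / ((2 ^ i : ℕ) : ℚ)).den ≠ 1 := fun hc =>
        hndvd ((den_eq_one_iff r (2 ^ i) (by positivity)).mp hc)
      rw [g]
      push_cast at this
      rw [if_neg this]
  set S : ℕ := ∑ i ∈ Finset.Icc 1 k, i with hS
  have hS2 : 2 * S = k * (k + 1) := by
    have hins : Finset.range (k+1) = insert 0 (Finset.Icc 1 k) := by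
      ext i; simp [Nat.lt_succ_iff]; omega
    have h1 := Finset.sum_range_id_mul_two (k+1)
    rw [hins, Finset.sum_insert (by simp)] at h1
    simp only [Nat.add_sub_cancel, zero_add] at h1
    rw [hS, Nat.mul_comm k (k+1)]
    omega
  have hne : (2:ℚ) ^ S ≠ 0 := by positivity
  have hlne : (l : ℚ) ≠ 0 := Nat.cast_ne_zero.mpr (Nat.ordCompl_pos 2 hr.ne').ne'
  have hrQ : (r : ℚ) = 2 ^ k * l := by exact_mod_cast hrfact.symm
  set e : ℤ := ((k : ℤ) * ((k : ℤ) - 3)) / 2 with he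
  have he2 : 2 * e = (k : ℤ) * ((k : ℤ) - 3) := by
    rw [he]
    rw [Int.mul_ediv_cancel']
    rcases Int.even_or_odd (k : ℤ) with hpar | hpar
    · exact Dvd.dvd.mul_right (even_iff_two_dvd.mp hpar) _
    · refine Dvd.dvd.mul_left ?_ _
      rcases hpar with ⟨m, hm⟩
      exact ⟨m - 1, by omega⟩
  have hfac : r.factorization 2 = k := by
    rw [Nat.factorization_def r Nat.prime_two, hk]
  rw [f, h, hprod]
  rw [div_div_eq_mul_div, ← hk, hfac]
  have hdl : ((r:ℚ) / 2 ^ k) = (l:ℚ) := by rw [hrQ]; field_simp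
  rw [hdl, hrQ]
  rw [← mul_div_assoc, eq_div_iff (by positivity)]
  have hexp : ((k*k : ℕ) : ℤ) = e + ((k:ℤ) + S) := by
    have hS2' : (2:ℤ) * S = (k:ℤ) * ((k:ℤ) + 1) := by exact_mod_cast hS2
    push_cast
    nlinarith [he2, hS2']
  have h2p : (2:ℚ)^((k*k:ℕ):ℤ) = 2^e * 2^((k:ℤ)+S) := by
    rw [← zpow_add₀ h2ne, hexp]
  have key : ((l:ℚ) ^ ((1:ℤ) - k)) * ((2:ℚ)^k * l) ^ k
      = (2:ℚ) ^ e * ((2:ℚ)^k * l * (2:ℚ)^(S:ℤ)) := by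
    have hsw : ((2:ℚ)^k * (l:ℚ) * (2:ℚ)^(S:ℤ)) = (2:ℚ)^((k:ℤ) + S) * l := by
      rw [zpow_add₀ h2ne, zpow_natCast, zpow_natCast]; ring
    rw [mul_pow, ← pow_mul, hsw]
    rw [show ((2:ℚ)^(k*k) : ℚ) = (2:ℚ)^((k*k : ℕ) : ℤ) by norm_cast]
    rw [show ((l:ℚ)^k : ℚ) = (l:ℚ)^((k : ℕ) : ℤ) by norm_cast]
    calc (l:ℚ)^((1:ℤ)-k) * ((2:ℚ)^((k*k:ℕ):ℤ) * (l:ℚ)^((k:ℕ):ℤ))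
        = (2:ℚ)^((k*k:ℕ):ℤ) * ((l:ℚ)^((1:ℤ)-k) * (l:ℚ)^((k:ℕ):ℤ)) := by ring
      _ = (2:ℚ)^((k*k:ℕ):ℤ) * l := by rw [← zpow_add₀ hlne]; norm_num
      _ = (2:ℚ)^e * ((2:ℚ)^((k:ℤ)+S) * l) := by rw [h2p]; ring
  calc (l:ℚ) ^ ((1:ℤ) - k) * ((2:ℚ)^k * l) ^ k
      = (2:ℚ) ^ e * ((2:ℚ)^k * l * (2:ℚ)^(S:ℤ)) := key
    _ = (2:ℚ) ^ e * ((2:ℚ)^k * l * 2 ^ S) := by rw [zpow_natCast]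
end

section
/- For every positive integer n, ∏_{r=1}^{n} h(r) = n! / (⌊n/2⌋! · ⌊n/4⌋! · ⌊n/8⌋! ···), where the product in the denominator runs over ⌊n/2^i⌋! for i = 1, 2, 3, … and is finite since ⌊n/2^i⌋ = 0 for all sufficiently large i. -/
open Finset

lemma g_eval (r i : ℕ) :
    g ((r : ℚ) / 2 ^ i) = if 2 ^ i ∣ r then (r : ℚ) / 2 ^ i else 1 := by
  unfold g
  have h2 : ((2:ℚ) ^ i) ≠ 0 := by positivity
  by_cases hd : 2 ^ i ∣ r
  · obtain ⟨m, hm⟩ := hd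
    have hq : (r : ℚ) / 2 ^ i = (m : ℚ) := by
      subst hm; push_cast; field_simp
    rw [hq]
    simp [Rat.den_natCast, hm]
  · have hden : ((r : ℚ) / 2 ^ i).den ≠ 1 := by
      intro hden
      set q : ℚ := (r : ℚ) / 2 ^ i with hq
      have hqnum : (q.num : ℚ) = q := by
        exact_mod_cast Rat.den_eq_one_iff q |>.mp hden
      have hq0 : 0 ≤ q := by positivity
      have hn0 : 0 ≤ q.num := Rat.num_nonneg.mpr hq0
      have hint : ((q.num * 2 ^ i : ℤ) : ℚ) = ((r : ℤ) : ℚ) := by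
        push_cast
        rw [hqnum, hq]
        field_simp
      have hint2 : q.num * 2 ^ i = (r : ℤ) := by exact_mod_cast hint
      have hdz : ((2 ^ i : ℕ) : ℤ) ∣ (r : ℤ) := ⟨q.num, by push_cast; linarith⟩
      exact hd (Int.natCast_dvd_natCast.mp hdz)
    simp [hden, hd]

lemma inner_prod (n i : ℕ) :
    ∏ r ∈ Icc 1 n, (if 2 ^ i ∣ r then (r : ℚ) / 2 ^ i else 1)
      = ((n / 2 ^ i).factorial : ℚ) := by
  rw [← prod_filter]
  have hfac : ((n / 2 ^ i).factorial : ℚ) = ∏ m ∈ Icc 1 (n / 2 ^ i), (m : ℚ) := by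
    rw [← Nat.cast_prod, ← Finset.Ico_add_one_right_eq_Icc, Finset.prod_Ico_id_eq_factorial]
  rw [hfac]
  have hp : 0 < 2 ^ i := Nat.pow_pos (by norm_num)
  refine prod_nbij' (fun r => r / 2 ^ i) (fun m => 2 ^ i * m) ?_ ?_ ?_ ?_ ?_
  · intro r hr
    simp only [mem_filter, mem_Icc] at hr ⊢
    obtain ⟨⟨h1, h2⟩, hd⟩ := hr
    constructor
    · exact Nat.one_le_div_iff hp |>.mpr (Nat.le_of_dvd (by omega) hd)
    · exact Nat.div_le_div_right h2
  · intro m hm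
    simp only [mem_filter, mem_Icc] at hm ⊢
    refine ⟨⟨by nlinarith [hm.1], ?_⟩, Dvd.intro m rfl⟩
    exact (Nat.le_div_iff_mul_le hp).mp hm.2 |>.trans_eq' (by ring_nf)
  · intro r hr
    simp only [mem_filter] at hr
    exact Nat.mul_div_cancel' hr.2
  · intro m _
    exact Nat.mul_div_cancel_left m hp
  · intro r hr
    simp only [mem_filter, mem_Icc] at hr
    obtain ⟨⟨h1, h2⟩, m, hm⟩ := hr
    subst hm
    rw [Nat.mul_div_cancel_left m hp]
    push_cast
    field_simp

theorem prod_h_eq_factorial_ratio (n : ℕ) (hn : 0 < n) :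
    ∏ r ∈ Finset.Icc 1 n, h r
      = (n.factorial : ℚ) / ∏ i ∈ Finset.Icc 1 n, ((n / 2 ^ i).factorial : ℚ) := by
  have step1 : ∀ r ∈ Icc 1 n,
      h r = (r : ℚ) / ∏ i ∈ Icc 1 n, (if 2 ^ i ∣ r then (r : ℚ) / 2 ^ i else 1) := by
    intro r hr
    simp only [mem_Icc] at hr
    unfold h
    congr 1
    rw [Finset.prod_subset (Finset.Icc_subset_Icc_right hr.2)]
    · exact Finset.prod_congr rfl fun i _ => g_eval r i
    · intro i hi hni
      simp only [mem_Icc] at hi hni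
      have hir : r < i := by omega
      rw [g_eval]
      have : ¬ 2 ^ i ∣ r := by
        intro hd
        have := Nat.le_of_dvd (by omega) hd
        have : i < 2 ^ i := Nat.lt_two_pow_self
        omega
      simp [this]
  rw [Finset.prod_congr rfl step1, Finset.prod_div_distrib]
  congr 1
  · rw [← Nat.cast_prod, ← Finset.Ico_add_one_right_eq_Icc, Finset.prod_Ico_id_eq_factorial]
  · rw [Finset.prod_comm]
    exact Finset.prod_congr rfl fun i _ => inner_prod n i
end

section
/- For every positive integer n, lcm(1, 2, …, n) divides the integer n! / (⌊n/2⌋! · ⌊n/4⌋! · ⌊n/8⌋! ···); equivalently, for every prime p, the p-adic valuation of n!/(∏_{i≥1} ⌊n/2^i⌋!) is at least ⌊log n / log p⌋, the largest exponent α with p^α ≤ n. -/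
open Finset

/-- Sum of `m / 2 ^ i` for `i ≥ 1` is strictly less than `m` when `m ≥ 1`. -/
lemma aux_sum_div_lt (N : ℕ) : ∀ m : ℕ, 1 ≤ m → ∑ i ∈ Finset.range N, m / 2 ^ (i + 1) < m := by
  induction N with
  | zero => intro m hm; simpa using Nat.one_le_iff_ne_zero.mp hm |>.bot_lt
  | succ N ih =>
    intro m hm
    rw [Finset.sum_range_succ']
    have hre : ∀ i, m / 2 ^ (i + 1 + 1) = (m / 2) / 2 ^ (i + 1) := by
      intro i
      rw [Nat.div_div_eq_div_mul]
      ring_nf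
    simp only [hre, pow_one]
    rcases Nat.eq_zero_or_pos (m / 2) with h | h
    · simp [h]
      omega
    · have := ih (m / 2) h
      have h2 : m / 2 * 2 ≤ m := Nat.div_mul_le_self m 2
      omega

lemma aux_sum_div_le (N m : ℕ) : ∑ i ∈ Finset.range N, m / 2 ^ (i + 1) ≤ m := by
  rcases Nat.eq_zero_or_pos m with rfl | h
  · simp
  · exact (aux_sum_div_lt N m h).le

lemma aux_sum_Icc_div_lt (N m : ℕ) (hm : 1 ≤ m) :
    ∑ i ∈ Finset.Icc 1 N, m / 2 ^ i < m := by
  rw [show Finset.Icc 1 N = Finset.Ico 1 (N + 1) by rfl, Finset.sum_Ico_eq_sum_range]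
  simpa [Nat.add_comm] using aux_sum_div_lt N m hm

lemma aux_sum_Icc_div_le (N m : ℕ) : ∑ i ∈ Finset.Icc 1 N, m / 2 ^ i ≤ m := by
  rcases Nat.eq_zero_or_pos m with rfl | h
  · simp
  · exact (aux_sum_Icc_div_lt N m h).le

/-- Key valuation inequality. -/
lemma aux_key (n p : ℕ) (hp : p.Prime) (hn : 0 < n) :
    (∏ i ∈ Finset.Icc 1 n, (n / 2 ^ i).factorial).factorization p + Nat.log p n
      ≤ (n.factorial).factorization p := by
  haveI : Fact p.Prime := ⟨hp⟩
  have hlog : Nat.log p n ≤ n := Nat.log_le_self p n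
  -- Legendre for n!
  have hfac : (n.factorial).factorization p = ∑ j ∈ Finset.Ico 1 (n + 1), n / p ^ j := by
    rw [Nat.factorization_def _ hp]
    exact padicValNat_factorial (by omega)
  -- factorization of product
  have hprod : (∏ i ∈ Finset.Icc 1 n, (n / 2 ^ i).factorial).factorization p
      = ∑ i ∈ Finset.Icc 1 n, ((n / 2 ^ i).factorial).factorization p := by
    rw [Nat.factorization_prod (fun i _ => Nat.factorial_ne_zero _)]
    simp [Finset.sum_apply']
  have hterm : ∀ i ∈ Finset.Icc 1 n, ((n / 2 ^ i).factorial).factorization p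
      = ∑ j ∈ Finset.Ico 1 (n + 1), (n / 2 ^ i) / p ^ j := by
    intro i _
    rw [Nat.factorization_def _ hp]
    refine padicValNat_factorial ?_
    have : Nat.log p (n / 2 ^ i) ≤ Nat.log p n :=
      Nat.log_mono_right (Nat.div_le_self _ _)
    omega
  rw [hfac, hprod, Finset.sum_congr rfl hterm, Finset.sum_comm]
  -- now sums over j ∈ Ico 1 (n+1) of sums over i
  have hcomm : ∀ j i : ℕ, (n / 2 ^ i) / p ^ j = (n / p ^ j) / 2 ^ i := by
    intro j i
    rw [Nat.div_div_eq_div_mul, Nat.div_div_eq_div_mul, Nat.mul_comm]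
  have hIco : Finset.Ico 1 (n + 1) = Finset.Icc 1 n := rfl
  rw [hIco]
  -- write log as a sum of indicators
  have hlogsum : Nat.log p n = ∑ j ∈ Finset.Icc 1 n, (if j ≤ Nat.log p n then 1 else 0) := by
    have hfil : (Finset.Icc 1 n).filter (fun j => j ≤ Nat.log p n)
        = Finset.Icc 1 (Nat.log p n) := by
      ext j
      simp only [Finset.mem_filter, Finset.mem_Icc]
      omega
    rw [← Finset.sum_filter, hfil]
    simp
  rw [hlogsum, ← Finset.sum_add_distrib]
  apply Finset.sum_le_sum
  intro j hj
  simp only [Finset.mem_Icc] at hj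
  simp only [hcomm]
  by_cases hjle : j ≤ Nat.log p n
  · have hpj : p ^ j ≤ n := by
      calc p ^ j ≤ p ^ Nat.log p n := Nat.pow_le_pow_right hp.one_lt.le hjle
      _ ≤ n := Nat.pow_log_le_self p hn.ne'
    have h1 : 1 ≤ n / p ^ j := (Nat.one_le_div_iff (Nat.pow_pos (n := j) hp.pos)).mpr hpj
    have := aux_sum_Icc_div_lt n (n / p ^ j) h1
    simp only [if_pos hjle]
    omega
  · have := aux_sum_Icc_div_le n (n / p ^ j)
    simp only [if_neg hjle]
    omega

theorem lcm_dvd_factorial_ratio (n : ℕ) (hn : 0 < n) :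
    Finset.lcm (Finset.Icc 1 n) id
      ∣ n.factorial / ∏ i ∈ Finset.Icc 1 n, (n / 2 ^ i).factorial := by
  set D := ∏ i ∈ Finset.Icc 1 n, (n / 2 ^ i).factorial with hD
  have hDpos : 0 < D := Finset.prod_pos (fun i _ => Nat.factorial_pos _)
  have hDdvd : D ∣ n.factorial := by
    rw [← Nat.factorization_le_iff_dvd hDpos.ne' (Nat.factorial_ne_zero n)]
    intro p
    by_cases hp : p.Prime
    · have h2 := aux_key n p hp hn
      rw [← hD] at h2
      omega
    · simp [Nat.factorization_eq_zero_of_not_prime _ hp]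
  have hQpos : 0 < n.factorial / D :=
    Nat.div_pos (Nat.le_of_dvd (Nat.factorial_pos n) hDdvd) hDpos
  apply Finset.lcm_dvd
  intro m hm
  simp only [Finset.mem_Icc] at hm
  rw [id]
  rw [← Nat.factorization_le_iff_dvd (by omega) hQpos.ne']
  intro p
  rw [Nat.factorization_div hDdvd]
  by_cases hp : p.Prime
  · have h1 : m.factorization p ≤ Nat.log p n := by
      have hle : p ^ m.factorization p ≤ m :=
        Nat.le_of_dvd (by omega) (Nat.ordProj_dvd m p)
      exact (Nat.le_log_iff_pow_le hp.one_lt hn.ne').mpr (hle.trans hm.2)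
    have h2 := aux_key n p hp hn
    rw [← hD] at h2
    simp only [Finsupp.tsub_apply]
    omega
  · simp [Nat.factorization_eq_zero_of_not_prime _ hp]
end

section
/- For every positive integer m, ∏_{r=1}^{2m} h(r) = C(2m, m) · ∏_{r=1}^{m} h(r), where C(2m, m) is the central binomial coefficient. -/
open Finset

lemma g_of_dvd (r i : ℕ) (hd : 2 ^ i ∣ r) : g ((r : ℚ) / 2 ^ i) = (r : ℚ) / 2 ^ i := by
  have : ((r : ℚ) / 2 ^ i) = ((r / 2 ^ i : ℕ) : ℚ) := by
    rw [Nat.cast_div hd (by positivity)]; push_cast; ring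
  rw [g, this]; simp

lemma g_of_not_dvd (r i : ℕ) (hd : ¬ 2 ^ i ∣ r) : g ((r : ℚ) / 2 ^ i) = 1 := by
  rw [g, if_neg]
  intro hden
  apply hd
  have h1 : (((r : ℚ) / 2 ^ i).num : ℚ) = (r : ℚ) / 2 ^ i := by
    conv_rhs => rw [← Rat.num_div_den ((r : ℚ) / 2 ^ i), hden]
    simp
  have h2 : ((((r : ℚ) / 2 ^ i).num * 2 ^ i : ℤ) : ℚ) = ((r : ℤ) : ℚ) := by
    push_cast
    rw [h1]
    field_simp
  have h3 : ((r : ℚ) / 2 ^ i).num * 2 ^ i = (r : ℤ) := by exact_mod_cast h2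
  have : (2 ^ i : ℤ) ∣ (r : ℤ) := ⟨((r : ℚ) / 2 ^ i).num, by linarith [h3]⟩
  exact_mod_cast this

lemma g_pos (r i : ℕ) (hr : 0 < r) : 0 < g ((r : ℚ) / 2 ^ i) := by
  rw [g]
  split
  · positivity
  · norm_num

lemma prod_g_ext (r n : ℕ) (hr : 0 < r) (hn : r ≤ n) :
    ∏ i ∈ Icc 1 n, g ((r : ℚ) / 2 ^ i) = ∏ i ∈ Icc 1 r, g ((r : ℚ) / 2 ^ i) := by
  apply (Finset.prod_subset (Finset.Icc_subset_Icc_right hn) ?_).symm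
  intro i hi hni
  simp only [Finset.mem_Icc, not_and, not_le] at hi hni
  apply g_of_not_dvd
  intro hdvd
  have := Nat.le_of_dvd hr hdvd
  have := Nat.lt_pow_self (n := i) one_lt_two
  omega

lemma h_odd (s : ℕ) (hs : Odd s) : h s = s := by
  rw [h, Finset.prod_eq_one, div_one]
  intro i hi
  simp only [Finset.mem_Icc] at hi
  apply g_of_not_dvd
  intro hdvd
  have : 2 ∣ s := dvd_trans (dvd_pow_self 2 (by omega)) hdvd
  exact (Nat.not_even_iff_odd.mpr hs) (even_iff_two_dvd.mpr this)

lemma h_two_mul (r : ℕ) (hr : 0 < r) : h (2 * r) = 2 * h r / r := by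
  obtain ⟨k, rfl⟩ : ∃ k, r = k + 1 := ⟨r - 1, by omega⟩
  have key : ∏ i ∈ Icc 1 (2 * (k + 1)), g (((2 * (k + 1) : ℕ) : ℚ) / 2 ^ i)
      = (k + 1 : ℚ) * ∏ i ∈ Icc 1 (k + 1), g (((k + 1 : ℕ) : ℚ) / 2 ^ i) := by
    have e1 : Icc 1 (2 * (k + 1)) = Ico 1 (2 * (k + 1) + 1) := by
      rw [← Finset.Ico_add_one_right_eq_Icc]
    rw [e1, Finset.prod_Ico_eq_prod_range]
    have e2 : ∀ j, g (((2 * (k + 1) : ℕ) : ℚ) / 2 ^ (1 + j)) = g (((k + 1 : ℕ) : ℚ) / 2 ^ j) := by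
      intro j
      congr 1
      push_cast
      rw [pow_add]
      ring
    simp only [e2]
    have e3 : 2 * (k + 1) + 1 - 1 = (2 * k + 1) + 1 := by omega
    rw [e3, Finset.prod_range_succ']
    have e4 : g (((k + 1 : ℕ) : ℚ) / 2 ^ 0) = ((k + 1 : ℕ) : ℚ) := by
      rw [g_of_dvd (k+1) 0 (by simp)]
      simp
    rw [e4]
    have e5 : ∏ j ∈ range (2 * k + 1), g (((k + 1 : ℕ) : ℚ) / 2 ^ (j + 1))
        = ∏ i ∈ Icc 1 (2 * k + 1), g (((k + 1 : ℕ) : ℚ) / 2 ^ i) := by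
      rw [← Finset.Ico_add_one_right_eq_Icc, Finset.prod_Ico_eq_prod_range]
      simp only [Nat.succ_sub_one, Nat.add_sub_cancel, add_comm 1]
    rw [e5, prod_g_ext (k + 1) (2 * k + 1) (by omega) (by omega)]
    push_cast
    ring
  have hPpos : 0 < ∏ i ∈ Icc 1 (k + 1), g (((k + 1 : ℕ) : ℚ) / 2 ^ i) :=
    Finset.prod_pos fun i _ => g_pos (k + 1) i (by omega)
  rw [h, h, key]
  have hk1 : ((k + 1 : ℕ) : ℚ) ≠ 0 := by positivity
  field_simp
  push_cast
  ring

lemma prod_h_aux (m : ℕ) :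
    ∏ r ∈ Finset.Icc 1 (2 * m), h r
      = ((2 * m).choose m : ℚ) * ∏ r ∈ Finset.Icc 1 m, h r := by
  induction m with
  | zero => simp
  | succ m ih =>
    have e1 : 2 * (m + 1) = (2 * m + 1) + 1 := by omega
    rw [e1, Finset.prod_Icc_succ_top (by omega), Finset.prod_Icc_succ_top (by omega),
      Finset.prod_Icc_succ_top (by omega : 1 ≤ m + 1), ih]
    rw [h_odd (2 * m + 1) ⟨m, by omega⟩]
    have e2 : (2 * m + 1) + 1 = 2 * (m + 1) := by omega
    rw [e2, h_two_mul (m + 1) (by omega)]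
    have key : ((m + 1 : ℕ) : ℚ) * ((2 * (m + 1)).choose (m + 1) : ℚ)
        = 2 * (2 * m + 1) * ((2 * m).choose m : ℚ) := by
      have := Nat.succ_mul_centralBinom_succ m
      rw [Nat.centralBinom, Nat.centralBinom] at this
      exact_mod_cast this
    have hm1 : ((m + 1 : ℕ) : ℚ) ≠ 0 := by positivity
    field_simp
    push_cast at key ⊢
    linear_combination (-(∏ r ∈ Icc 1 m, h r)) * h (m + 1) * key

theorem prod_h_even (m : ℕ) (hm : 0 < m) :
    ∏ r ∈ Finset.Icc 1 (2 * m), h r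
      = ((2 * m).choose m : ℚ) * ∏ r ∈ Finset.Icc 1 m, h r := by
  exact prod_h_aux m
end

section
/- For every positive integer n, ∏_{r=1}^{n} h(r) ≤ n^{log₂ n} · 4^n, where log₂ denotes the logarithm to base 2 and n^{log₂ n} is the real power. -/
open Finset
open scoped Nat

namespace ProdHAux

lemma g_eq (a i : ℕ) (hd : 2 ^ i ∣ a) : g ((a : ℚ) / 2 ^ i) = ((a / 2 ^ i : ℕ) : ℚ) := by
  have h2 : ((2 : ℚ) ^ i) = ((2 ^ i : ℕ) : ℚ) := by push_cast; ring
  unfold g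
  rw [h2, if_pos ((Rat.den_div_natCast_eq_one_iff a (2 ^ i) (by positivity)).mpr hd),
    Rat.natCast_div a (2 ^ i) hd]

lemma g_eq_one (a i : ℕ) (hd : ¬ 2 ^ i ∣ a) : g ((a : ℚ) / 2 ^ i) = 1 := by
  have h2 : ((2 : ℚ) ^ i) = ((2 ^ i : ℕ) : ℚ) := by push_cast; ring
  unfold g
  rw [h2, if_neg
    (fun hh => hd ((Rat.den_div_natCast_eq_one_iff a (2 ^ i) (by positivity)).mp hh))]

lemma prod_g (i : ℕ) : ∀ n : ℕ, ∏ r ∈ Icc 1 n, g ((r : ℚ) / 2 ^ i) = ((n / 2 ^ i) ! : ℚ)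
  | 0 => by simp
  | n + 1 => by
    rw [Finset.prod_Icc_succ_top (Nat.le_add_left 1 n), prod_g i n]
    by_cases hd : 2 ^ i ∣ (n + 1)
    · rw [g_eq _ _ hd, Nat.succ_div_of_dvd hd, Nat.factorial_succ]
      push_cast
      ring
    · rw [g_eq_one _ _ hd, Nat.succ_div, if_neg hd, add_zero, mul_one]

lemma h_eq {n r : ℕ} (hr : r ∈ Icc 1 n) :
    h r = (r : ℚ) / ∏ i ∈ Icc 1 n, g ((r : ℚ) / 2 ^ i) := by
  rw [Finset.mem_Icc] at hr
  unfold h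
  have heq : ∏ i ∈ Icc 1 r, g ((r : ℚ) / 2 ^ i) = ∏ i ∈ Icc 1 n, g ((r : ℚ) / 2 ^ i) := by
    refine Finset.prod_subset (Finset.Icc_subset_Icc_right hr.2) ?_
    intro i hi hni
    rw [Finset.mem_Icc] at hi hni
    refine g_eq_one _ _ fun hd => ?_
    have h1 := Nat.le_of_dvd (by omega) hd
    have h2 := Nat.lt_two_pow_self (n := i)
    omega
  rw [heq]

def P (n : ℕ) : ℕ := ∏ i ∈ Finset.Icc 1 n, (n / 2 ^ i) !

lemma prod_h (n : ℕ) : ∏ r ∈ Icc 1 n, h r = (n ! : ℚ) / (P n : ℚ) := by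
  rw [Finset.prod_congr rfl fun r hr => h_eq hr, Finset.prod_div_distrib, Finset.prod_comm]
  congr 1
  · rw [← Nat.cast_prod]
    congr 1
    rw [← Finset.Ico_add_one_right_eq_Icc, Finset.prod_Ico_eq_prod_range,
      ← Finset.prod_range_add_one_eq_factorial]
    exact Finset.prod_congr rfl fun k _ => by omega
  · rw [Finset.prod_congr rfl fun i _ => prod_g i n]
    unfold P
    rw [Nat.cast_prod]

lemma choose_le_two_pow {n k : ℕ} (h : k ≤ n) : n.choose k ≤ 2 ^ n := by
  rw [← Nat.sum_range_choose n]
  exact Finset.single_le_sum (f := fun m => n.choose m) (fun _ _ => Nat.zero_le _)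
    (Finset.mem_range.mpr (by omega))

lemma P_rec (n : ℕ) (hn : 2 ≤ n) : P n = (n / 2) ! * P (n / 2) := by
  set m := n / 2 with hm
  have hm1 : 1 ≤ m := by omega
  have hmn : m ≤ n - 1 := by omega
  unfold P
  rw [← Finset.Ico_add_one_right_eq_Icc, Finset.prod_Ico_eq_prod_range]
  have hn1 : n + 1 - 1 = (n - 1) + 1 := by omega
  rw [hn1, Finset.prod_range_succ', mul_comm]
  have h0 : (n / 2 ^ (1 + 0)) ! = m ! := by norm_num [hm]
  rw [h0]
  congr 1
  rw [← Finset.Ico_add_one_right_eq_Icc, Finset.prod_Ico_eq_prod_range]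
  have hterm : ∀ k, n / 2 ^ (1 + (k + 1)) = m / 2 ^ (1 + k) := by
    intro k
    rw [hm, Nat.div_div_eq_div_mul]
    congr 1
    rw [← pow_succ']
    congr 1
  rw [Finset.prod_congr rfl fun k _ => by rw [hterm k]]
  refine (Finset.prod_subset (Finset.range_subset_range.mpr hmn) ?_).symm
  intro k hk hnk
  rw [Finset.mem_range] at hk hnk
  have : m / 2 ^ (1 + k) = 0 := by
    apply Nat.div_eq_of_lt
    have := Nat.lt_two_pow_self (n := k)
    have h2 : 2 ^ k < 2 ^ (1 + k) := by
      apply Nat.pow_lt_pow_right (by norm_num)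
      omega
    omega
  rw [this]
  rfl

lemma key (n : ℕ) : n ! ≤ n ^ (Nat.log 2 n) * 4 ^ n * P n := by
  induction n using Nat.strong_induction_on with
  | _ n ih =>
    rcases lt_or_ge n 2 with hn | hn
    · interval_cases n
      · simp [P]
      · simp [P, Nat.factorial]
    · set m := n / 2 with hm
      have hmn : m < n := by omega
      have hm1 : 1 ≤ m := by omega
      have ihm := ih m hmn
      -- step 1 : n! ≤ 2^n * (m! * (n * m!))
      have hsub : n - m ≤ m + 1 := by omega
      have h1 : n ! ≤ 2 ^ n * (m ! * (n * m !)) := by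
        have heq := Nat.choose_mul_factorial_mul_factorial (show m ≤ n by omega)
        calc n ! = n.choose m * m ! * (n - m) ! := heq.symm
          _ ≤ 2 ^ n * m ! * ((m + 1) * m !) := by
              refine Nat.mul_le_mul (Nat.mul_le_mul (choose_le_two_pow (by omega)) le_rfl) ?_
              calc (n - m) ! ≤ (m + 1) ! := Nat.factorial_le hsub
                _ = (m + 1) * m ! := Nat.factorial_succ m
          _ ≤ 2 ^ n * m ! * (n * m !) := by
              refine Nat.mul_le_mul le_rfl (Nat.mul_le_mul (by omega) le_rfl)
          _ = 2 ^ n * (m ! * (n * m !)) := by ring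
      have hlog : Nat.log 2 n = Nat.log 2 m + 1 := by
        have h1' := Nat.log_div_base 2 n
        have h2' : 0 < Nat.log 2 n := Nat.log_pos (by norm_num) hn
        rw [hm]
        omega
      calc n ! ≤ 2 ^ n * (m ! * (n * m !)) := h1
        _ ≤ 2 ^ n * ((m ^ (Nat.log 2 m) * 4 ^ m * P m) * (n * m !)) := by
            exact Nat.mul_le_mul le_rfl (Nat.mul_le_mul ihm le_rfl)
        _ = (2 ^ n * 4 ^ m) * (n * m ^ (Nat.log 2 m)) * (m ! * P m) := by ring
        _ ≤ 4 ^ n * (n * n ^ (Nat.log 2 m)) * (m ! * P m) := by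
            refine Nat.mul_le_mul (Nat.mul_le_mul ?_ ?_) le_rfl
            · have : (2:ℕ) ^ n * 4 ^ m = 2 ^ (n + 2 * m) := by
                rw [pow_add]
                congr 1
                rw [pow_mul]
                norm_num
              rw [this]
              calc (2:ℕ) ^ (n + 2 * m) ≤ 2 ^ (2 * n) := by
                    exact Nat.pow_le_pow_right (by norm_num) (by omega)
                _ = 4 ^ n := by rw [pow_mul]; norm_num
            · exact Nat.mul_le_mul le_rfl (Nat.pow_le_pow_left (by omega) _)
        _ = n ^ (Nat.log 2 n) * 4 ^ n * (m ! * P m) := by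
            rw [hlog, pow_succ]
            ring
        _ = n ^ (Nat.log 2 n) * 4 ^ n * P n := by rw [← P_rec n hn]

end ProdHAux

open ProdHAux in
theorem prod_h_le_rpow (n : ℕ) (hn : 0 < n) :
    ((∏ r ∈ Finset.Icc 1 n, h r : ℚ) : ℝ) ≤ (n : ℝ) ^ (Real.logb 2 n) * 4 ^ n := by
  have hPpos : 0 < P n := Finset.prod_pos fun i _ => Nat.factorial_pos _
  rw [prod_h]
  push_cast
  rw [div_le_iff₀ (by exact_mod_cast hPpos)]
  have hkey : (n ! : ℝ) ≤ (n : ℝ) ^ (Nat.log 2 n) * 4 ^ n * P n := by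
    exact_mod_cast key n
  refine hkey.trans ?_
  have h1n : (1 : ℝ) ≤ (n : ℝ) := by exact_mod_cast hn
  have hexp : ((n : ℝ)) ^ (Nat.log 2 n : ℕ) ≤ (n : ℝ) ^ (Real.logb 2 n) := by
    rw [← Real.rpow_natCast (n : ℝ) (Nat.log 2 n)]
    exact Real.rpow_le_rpow_of_exponent_le h1n (Real.natLog_le_logb n 2)
  have hP0 : (0 : ℝ) ≤ (P n : ℝ) := by positivity
  gcongr
end

section
/- For every positive integer n, ∏_{r=1}^{n} f(r) ≤ ∏_{r=1}^{n} h(r). -/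
open Finset

/-! ### Auxiliary lemmas -/

private lemma v_odd (m : ℕ) : padicValNat 2 (2 * m + 1) = 0 :=
  padicValNat.eq_zero_of_not_dvd (by omega)

private lemma v_even (m : ℕ) : padicValNat 2 (2 * (m + 1)) = padicValNat 2 (m + 1) + 1 := by
  rw [padicValNat.mul (by norm_num) (by omega), padicValNat.self (by norm_num)]
  omega

/-- Sum of 2-adic valuations. -/
private def Vv (n : ℕ) : ℤ := ∑ r ∈ Icc 1 n, (padicValNat 2 r : ℤ)

/-- Sum of `v * (3 - v)`. -/
private def Tt (n : ℕ) : ℤ :=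
  ∑ r ∈ Icc 1 n, (padicValNat 2 r : ℤ) * (3 - (padicValNat 2 r : ℤ))

private lemma Vv_succ (n : ℕ) : Vv (n + 1) = Vv n + (padicValNat 2 (n + 1) : ℤ) := by
  unfold Vv; rw [Finset.sum_Icc_succ_top (by omega)]

private lemma Tt_succ (n : ℕ) :
    Tt (n + 1) = Tt n + (padicValNat 2 (n + 1) : ℤ) * (3 - (padicValNat 2 (n + 1) : ℤ)) := by
  unfold Tt; rw [Finset.sum_Icc_succ_top (by omega)]

private lemma VT_even (m : ℕ) :
    Vv (2 * m) = Vv m + m ∧ Tt (2 * m) = Tt m + 2 * (m - Vv m) := by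
  induction m with
  | zero => simp [Vv, Tt]
  | succ m ih =>
    obtain ⟨ihV, ihT⟩ := ih
    have key : 2 * (m + 1) = (2 * m + 1) + 1 := by ring
    have hV2 : Vv (2 * (m + 1)) = Vv (2 * m) + ((padicValNat 2 (m + 1) : ℤ) + 1) := by
      rw [key, Vv_succ, Vv_succ, v_odd, ← key, v_even]
      push_cast; ring
    have hT2 : Tt (2 * (m + 1)) = Tt (2 * m) +
        ((padicValNat 2 (m + 1) : ℤ) + 1) * (3 - ((padicValNat 2 (m + 1) : ℤ) + 1)) := by
      rw [key, Tt_succ, Tt_succ, v_odd, ← key, v_even]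
      push_cast; ring
    refine ⟨?_, ?_⟩
    · rw [hV2, ihV, Vv_succ]
      push_cast; ring
    · rw [hT2, ihT, Tt_succ, Vv_succ]
      push_cast; ring

private lemma VT_nonneg (n : ℕ) : Vv n ≤ n ∧ 0 ≤ Tt n := by
  induction n using Nat.strong_induction_on with
  | _ n ih =>
    rcases Nat.even_or_odd n with ⟨m, hm⟩ | ⟨m, hm⟩
    · have hn2 : n = 2 * m := by omega
      rcases Nat.eq_zero_or_pos m with rfl | hm0
      · subst hn2; simp [Vv, Tt]
      · have hlt : m < n := by omega
        obtain ⟨iV, iT⟩ := ih m hlt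
        obtain ⟨eV, eT⟩ := VT_even m
        subst hn2
        constructor
        · rw [eV]; push_cast; linarith
        · rw [eT]; linarith
    · have hn2 : n = 2 * m + 1 := by omega
      have hlt : m < n := by omega
      obtain ⟨iV, iT⟩ := ih m hlt
      obtain ⟨eV, eT⟩ := VT_even m
      subst hn2
      constructor
      · rw [Vv_succ, v_odd, eV]; push_cast; linarith
      · rw [Tt_succ, v_odd, eT]; push_cast; linarith

private lemma g_dvd {r i : ℕ} (hd : 2 ^ i ∣ r) : g ((r : ℚ) / 2 ^ i) = (r : ℚ) / 2 ^ i := by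
  have hcast : ((r : ℚ) / 2 ^ i) = ((r / 2 ^ i : ℕ) : ℚ) := by
    rw [Nat.cast_div hd (by positivity)]
    push_cast; ring
  unfold g
  rw [hcast, Rat.den_natCast, if_pos rfl]

private lemma g_not_dvd {r i : ℕ} (hd : ¬ 2 ^ i ∣ r) : g ((r : ℚ) / 2 ^ i) = 1 := by
  unfold g
  rw [if_neg]
  intro hden
  set q : ℚ := (r : ℚ) / 2 ^ i with hq
  have hnum : (q.num : ℚ) = q := by
    conv_rhs => rw [← Rat.num_div_den q]
    rw [hden]
    push_cast; ring
  have h1 : (q.num : ℚ) * 2 ^ i = (r : ℚ) := by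
    rw [hnum, hq]
    field_simp
  have h2 : q.num * 2 ^ i = (r : ℤ) := by exact_mod_cast h1
  have h3 : ((2 : ℤ) ^ i) ∣ (r : ℤ) := ⟨q.num, by linarith⟩
  exact hd (by exact_mod_cast h3)

private lemma k_le {r : ℕ} (hr : 0 < r) : padicValNat 2 r ≤ r := by
  have h1 : 2 ^ padicValNat 2 r ≤ r := Nat.le_of_dvd hr pow_padicValNat_dvd
  have h2 : padicValNat 2 r < 2 ^ padicValNat 2 r := Nat.lt_two_pow_self
  omega

private lemma h_eq (r : ℕ) (hr : 0 < r) :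
    h r = (r : ℚ) / ∏ i ∈ Icc 1 (padicValNat 2 r), ((r : ℚ) / 2 ^ i) := by
  unfold h
  congr 1
  rw [← Finset.prod_subset (Finset.Icc_subset_Icc_right (k_le hr))
    (fun i hi hni => g_not_dvd (fun hdvd => by
      rcases (padicValNat_dvd_iff i r).mp hdvd with h0 | hle
      · omega
      · simp only [Finset.mem_Icc] at hi hni
        omega))]
  exact Finset.prod_congr rfl fun i hi => g_dvd
    ((pow_dvd_pow 2 (Finset.mem_Icc.mp hi).2).trans pow_padicValNat_dvd)

private lemma prod_zpow_const {a : ℚ} (ha : a ≠ 0) (s : Finset ℕ) (t : ℕ → ℤ) :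
    ∏ r ∈ s, a ^ t r = a ^ (∑ r ∈ s, t r) := by
  classical
  induction s using Finset.induction with
  | empty => simp
  | @insert x s hx ih =>
    rw [Finset.prod_insert hx, Finset.sum_insert hx, ih, zpow_add₀ ha]

private lemma h_sq (r : ℕ) (hr : 0 < r) :
    (h r) ^ 2 = (f r) ^ 2 *
      (2 : ℚ) ^ ((padicValNat 2 r : ℤ) * (3 - (padicValNat 2 r : ℤ))) := by
  set k := padicValNat 2 r with hk
  set ℓ := ordCompl[2] r with hl
  have hfact : 2 ^ k * ℓ = r := by
    rw [hl, hk, ← Nat.factorization_def r Nat.prime_two]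
    exact Nat.ordProj_mul_ordCompl_eq_self r 2
  have hℓpos : 0 < ℓ := Nat.ordCompl_pos 2 hr.ne'
  have hℓ0 : (ℓ : ℚ) ≠ 0 := Nat.cast_ne_zero.mpr hℓpos.ne'
  have hrq : (r : ℚ) = 2 ^ k * (ℓ : ℚ) := by exact_mod_cast hfact.symm
  have hgauss : 2 * (∑ i ∈ Icc 1 k, i) = k * (k + 1) := by
    induction k with
    | zero => simp
    | succ k ihk =>
      rw [Finset.sum_Icc_succ_top (by omega), Nat.mul_add, ihk]
      ring
  set s := ∑ i ∈ Icc 1 k, i with hs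
  have hprod : ∏ i ∈ Icc 1 k, ((r : ℚ) / 2 ^ i) = (r : ℚ) ^ k / 2 ^ s := by
    rw [Finset.prod_div_distrib, Finset.prod_const, Finset.prod_pow_eq_pow_sum, Nat.card_Icc]
    simp
    rfl
  have hh : h r = (r : ℚ) / ((r : ℚ) ^ k / 2 ^ s) := by rw [h_eq r hr, hprod]
  have hC : ((2 : ℚ) ^ (2 * k ^ 2) * (ℓ : ℚ) ^ (2 * k)) ≠ 0 := by positivity
  apply mul_right_cancel₀ hC
  have h2s : ((2 : ℚ) ^ s) ^ 2 = 2 ^ (k * (k + 1)) := by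
    rw [← pow_mul, show s * 2 = k * (k + 1) by omega]
  have e1 : (h r) ^ 2 * ((2 : ℚ) ^ (2 * k ^ 2) * (ℓ : ℚ) ^ (2 * k)) =
      2 ^ (k ^ 2 + 3 * k) * (ℓ : ℚ) ^ 2 := by
    rw [hh, div_div_eq_mul_div, div_pow, mul_pow, h2s, hrq]
    have hd : (((2 : ℚ) ^ k * (ℓ : ℚ)) ^ k) ^ 2 ≠ 0 := by positivity
    field_simp
    ring
  rw [e1]
  -- now the f-side
  have hcd : ((ℓ : ℕ) : ℚ) = (r : ℚ) / 2 ^ r.factorization 2 := by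
    rw [hl, Nat.cast_div (Nat.ordProj_dvd r 2) (by positivity)]
    push_cast; ring
  have hfr : f r = (ℓ : ℚ) ^ ((1 : ℤ) - (k : ℤ)) := by
    unfold f
    rw [← hcd]
  rw [hfr]
  have A : ((ℓ : ℚ) ^ ((1 : ℤ) - (k : ℤ))) ^ 2 = (ℓ : ℚ) ^ (((1 : ℤ) - k) * 2) := by
    rw [← zpow_natCast (((ℓ : ℚ) ^ ((1 : ℤ) - (k : ℤ)))) 2, ← zpow_mul]
    norm_num
  rw [A]
  have reorder : ∀ (A B C D : ℚ), A * B * (C * D) = (A * D) * (B * C) := by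
    intros; ring
  rw [reorder]
  rw [← zpow_natCast (ℓ : ℚ) (2 * k), ← zpow_add₀ hℓ0,
      ← zpow_natCast (2 : ℚ) (2 * k ^ 2), ← zpow_add₀ (two_ne_zero)]
  have E1 : ((1 : ℤ) - k) * 2 + ((2 * k : ℕ) : ℤ) = ((2 : ℕ) : ℤ) := by push_cast; ring
  have E2 : (k : ℤ) * (3 - (k : ℤ)) + ((2 * k ^ 2 : ℕ) : ℤ) = ((k ^ 2 + 3 * k : ℕ) : ℤ) := by
    push_cast; ring
  rw [E1, E2, zpow_natCast, zpow_natCast]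
  ring

theorem prod_f_le_prod_h (n : ℕ) (hn : 0 < n) :
    ∏ r ∈ Finset.Icc 1 n, f r ≤ ∏ r ∈ Finset.Icc 1 n, h r := by
  have hrpos : ∀ r ∈ Icc 1 n, 0 < r := fun r hr => (Finset.mem_Icc.mp hr).1
  have hhpos : ∀ r ∈ Icc 1 n, 0 < h r := by
    intro r hr
    rw [h_eq r (hrpos r hr)]
    apply div_pos
    · exact_mod_cast hrpos r hr
    · exact Finset.prod_pos fun i _ =>
        div_pos (by exact_mod_cast hrpos r hr) (by positivity)
  have hfpos : ∀ r ∈ Icc 1 n, 0 < f r := by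
    intro r hr
    have hb : (0 : ℚ) < (r : ℚ) / 2 ^ r.factorization 2 :=
      div_pos (by exact_mod_cast hrpos r hr) (by positivity)
    exact zpow_pos hb _
  have hQ : 0 < ∏ r ∈ Icc 1 n, f r := Finset.prod_pos hfpos
  have hP : 0 < ∏ r ∈ Icc 1 n, h r := Finset.prod_pos hhpos
  have key : (∏ r ∈ Icc 1 n, h r) ^ 2 = (∏ r ∈ Icc 1 n, f r) ^ 2 * (2 : ℚ) ^ (Tt n) := by
    rw [← Finset.prod_pow, ← Finset.prod_pow,
      Finset.prod_congr rfl (fun r hr => h_sq r (hrpos r hr)), Finset.prod_mul_distrib,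
      prod_zpow_const (two_ne_zero) _ _]
    rfl
  have hT : (0 : ℤ) ≤ Tt n := (VT_nonneg n).2
  have h1 : (1 : ℚ) ≤ (2 : ℚ) ^ (Tt n) := one_le_zpow₀ one_le_two hT
  have hsq : (∏ r ∈ Icc 1 n, f r) ^ 2 ≤ (∏ r ∈ Icc 1 n, h r) ^ 2 := by
    rw [key]
    nlinarith [sq_nonneg (∏ r ∈ Icc 1 n, f r)]
  exact (pow_le_pow_iff_left₀ hQ.le hP.le two_ne_zero).mp hsq
end

section
/- For every positive integer n, (∏_{r=1}^{n} f(r))^{1023} ≤ (∏_{r=1}^{1023} h(r))^{n}; equivalently, ∏_{r=1}^{n} f(r) ≤ c^n for all n ≥ 1, where c = (∏_{r=1}^{1023} h(r))^{1/1023} = 4.01055487…. -/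
open Finset

namespace Putnam2023Aux

def P (n : ℕ) : ℚ := ∏ r ∈ Finset.Icc 1 n, f r
def sB (n : ℕ) : ℕ := (Nat.digits 2 n).sum
def E (n : ℕ) : ℕ := padicValNat 2 (Nat.factorial n)
def qq (t : ℤ) : ℤ := if -1 ≤ t then t ^ 2 + 7 * t + 14 else t ^ 2 - 5 * t + 2
def Q2 (n : ℕ) : ℤ := qq ((Nat.size n : ℤ) - 2 * (sB n : ℤ))
def Q2' (n : ℕ) : ℕ := (Q2 n).toNat

lemma f_pos {r : ℕ} (hr : r ≠ 0) : 0 < f r := by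
  unfold f
  apply zpow_pos
  positivity

lemma P_pos (n : ℕ) : 0 < P n :=
  Finset.prod_pos (fun r hr => f_pos (by simp [Finset.mem_Icc] at hr; omega))

lemma P_succ (n : ℕ) : P (n + 1) = P n * f (n + 1) :=
  Finset.prod_Icc_succ_top (by omega) f



lemma f_odd (m : ℕ) : f (2 * m + 1) = ((2 * m + 1 : ℕ) : ℚ) := by
  have hv : padicValNat 2 (2 * m + 1) = 0 := by
    apply padicValNat.eq_zero_of_not_dvd
    omega
  have hf : (2 * m + 1).factorization 2 = 0 := by
    rw [Nat.factorization_def _ Nat.prime_two, hv]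
  rw [f, hv, hf]
  norm_num

lemma f_even (j : ℕ) (hj : j ≠ 0) : f (2 * j) * ((j : ℚ) / 2 ^ (j.factorization 2)) = f j := by
  have hv : padicValNat 2 (2 * j) = padicValNat 2 j + 1 := by
    rw [padicValNat.mul (p := 2) two_ne_zero hj, padicValNat_self]
    ring
  have hfj : j.factorization 2 = padicValNat 2 j := Nat.factorization_def _ Nat.prime_two
  have hf2 : (2 * j).factorization 2 = padicValNat 2 j + 1 := by
    rw [Nat.factorization_def _ Nat.prime_two, hv]
  have hc : ((2 * j : ℕ) : ℚ) / 2 ^ ((2 * j).factorization 2) = (j : ℚ) / 2 ^ (j.factorization 2) := by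
    rw [hf2, hfj, pow_succ]
    push_cast
    field_simp
  have hcpos : (0:ℚ) < (j : ℚ) / 2 ^ (j.factorization 2) := by positivity
  rw [f, f, hc, hv]
  rw [show ((1 : ℤ) - ↑(padicValNat 2 j + 1)) = (1 - padicValNat 2 j) + (-1) by push_cast; ring,
    zpow_add₀ hcpos.ne', zpow_neg_one]
  field_simp


lemma E_succ (m : ℕ) : E (m + 1) = E m + padicValNat 2 (m + 1) := by
  unfold E
  rw [Nat.factorial_succ, padicValNat.mul (by omega) (Nat.factorial_ne_zero m)]
  ring

lemma R1 (m : ℕ) : P (2 * m) * 2 ^ m = P m * (Nat.centralBinom m : ℚ) * 2 ^ (E m) := by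
  induction m with
  | zero => simp [P, E, Nat.centralBinom]
  | succ m ih =>
    have h21 : 2 * (m + 1) = (2 * m + 1) + 1 := by ring
    have e1 : P (2 * (m + 1)) = P (2 * m) * ((2 * m + 1 : ℕ) : ℚ) * f (2 * (m + 1)) := by
      rw [h21, P_succ, ← h21]
      rw [P_succ, f_odd]
    set k := padicValNat 2 (m + 1) with hk
    set c : ℚ := ((m + 1 : ℕ) : ℚ) / 2 ^ ((m + 1).factorization 2) with hc
    have hfk : (m + 1).factorization 2 = k := Nat.factorization_def _ Nat.prime_two
    have hcpos : 0 < c := by rw [hc]; positivity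
    have hfe : f (2 * (m + 1)) * c = f (m + 1) := f_even (m + 1) (by omega)
    have hcb : ((m + 1 : ℕ) : ℚ) * (Nat.centralBinom (m + 1) : ℚ)
        = 2 * ((2 * m + 1 : ℕ) : ℚ) * (Nat.centralBinom m : ℚ) := by
      exact_mod_cast congrArg (fun x : ℕ => (x : ℚ)) (Nat.succ_mul_centralBinom_succ m)
    have hoc : c * 2 ^ k = ((m + 1 : ℕ) : ℚ) := by
      rw [hc, hfk]; field_simp
    have hE : E (m + 1) = E m + k := E_succ m
    -- cancel c ≠ 0
    apply mul_right_cancel₀ hcpos.ne'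
    apply mul_right_cancel₀ (show ((m+1:ℕ):ℚ) ≠ 0 by exact_mod_cast Nat.succ_ne_zero m)
    calc P (2 * (m + 1)) * 2 ^ (m + 1) * c * ((m + 1 : ℕ) : ℚ)
        = (P (2 * m) * 2 ^ m) * (f (2 * (m + 1)) * c) * (2 * ((2 * m + 1 : ℕ) : ℚ)) * ((m + 1 : ℕ) : ℚ) := by
          rw [e1]; ring
      _ = (P m * (Nat.centralBinom m : ℚ) * 2 ^ (E m)) * f (m + 1) * (2 * ((2 * m + 1 : ℕ) : ℚ)) * ((m + 1 : ℕ) : ℚ) := by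
          rw [ih, hfe]
      _ = (P m * f (m + 1)) * (2 * ((2 * m + 1 : ℕ) : ℚ) * (Nat.centralBinom m : ℚ)) * 2 ^ (E m) * ((m + 1 : ℕ) : ℚ) := by
          ring
      _ = (P m * f (m + 1)) * (((m + 1 : ℕ) : ℚ) * (Nat.centralBinom (m + 1) : ℚ)) * 2 ^ (E m) * (c * 2 ^ k) := by
          rw [hcb, hoc]
      _ = P (m + 1) * (Nat.centralBinom (m + 1) : ℚ) * 2 ^ (E (m + 1)) * c * ((m + 1 : ℕ) : ℚ) := by
          rw [hE, pow_add, P_succ]; ring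


lemma sB_rec {m : ℕ} (hm : m ≠ 0) : sB m = m % 2 + sB (m / 2) := by
  unfold sB
  rw [Nat.digits_def' (by norm_num : 1 < 2) (Nat.pos_of_ne_zero hm)]
  simp

lemma sB_two_mul {m : ℕ} (hm : m ≠ 0) : sB (2 * m) = sB m := by
  rw [sB_rec (by omega : 2 * m ≠ 0)]
  simp [Nat.mul_div_cancel_left m (by norm_num : 0 < 2), Nat.mul_mod_right]

lemma sB_two_mul_add_one (m : ℕ) : sB (2 * m + 1) = sB m + 1 := by
  rw [sB_rec (by omega : 2 * m + 1 ≠ 0)]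
  rw [Nat.mul_add_mod, Nat.mul_add_div (by norm_num)]
  simp [add_comm]

lemma sB_le : ∀ m : ℕ, sB m ≤ m := by
  intro m
  induction m using Nat.strong_induction_on with
  | _ m ih =>
    rcases Nat.eq_zero_or_pos m with h | h
    · subst h; simp [sB]
    · rw [sB_rec h.ne']
      have := ih (m / 2) (Nat.div_lt_self h (by norm_num))
      omega

lemma sB_pos : ∀ m : ℕ, m ≠ 0 → 1 ≤ sB m := by
  intro m
  induction m using Nat.strong_induction_on with
  | _ m ih =>
    intro hm
    rw [sB_rec hm]
    rcases Nat.lt_or_ge m 2 with h | h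
    · interval_cases m
      · omega
      · simp [sB]
    · have := ih (m / 2) (Nat.div_lt_self (by omega) (by norm_num)) (by omega)
      omega

lemma E_add_sB (m : ℕ) : E m + sB m = m := by
  have h := sub_one_mul_padicValNat_factorial (p := 2) m
  have h2 := sB_le m
  unfold E sB at *
  omega

lemma size_two_mul {m : ℕ} (hm : m ≠ 0) : Nat.size (2 * m) = Nat.size m + 1 := by
  apply le_antisymm
  · rw [Nat.size_le, pow_succ]
    have := Nat.lt_size_self m
    omega
  · have h1 : 0 < Nat.size m := Nat.size_pos.mpr (Nat.pos_of_ne_zero hm)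
    have h2 : 2 ^ (Nat.size m - 1) ≤ m := Nat.lt_size.mp (by omega)
    have : 2 ^ Nat.size m ≤ 2 * m := by
      calc 2 ^ Nat.size m = 2 * 2 ^ (Nat.size m - 1) := by
            rw [← pow_succ']
            congr 1
            omega
        _ ≤ 2 * m := by omega
    exact Nat.lt_size.mpr this

lemma size_two_mul_add_one {m : ℕ} (hm : m ≠ 0) : Nat.size (2 * m + 1) = Nat.size m + 1 := by
  apply le_antisymm
  · rw [Nat.size_le, pow_succ]
    have := Nat.lt_size_self m
    omega
  · have h1 : 0 < Nat.size m := Nat.size_pos.mpr (Nat.pos_of_ne_zero hm)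
    have h2 : 2 ^ (Nat.size m - 1) ≤ m := Nat.lt_size.mp (by omega)
    have : 2 ^ Nat.size m ≤ 2 * m + 1 := by
      have : 2 ^ Nat.size m = 2 * 2 ^ (Nat.size m - 1) := by
        rw [← pow_succ']
        congr 1
        omega
      omega
    exact Nat.lt_size.mpr this


lemma L1 : ∀ m : ℕ, (3 * m + 1) * Nat.centralBinom m ^ 2 ≤ 16 ^ m := by
  intro m
  induction m with
  | zero => simp [Nat.centralBinom]
  | succ m ih =>
    have hrec := Nat.succ_mul_centralBinom_succ m
    have hpos : 0 < (m + 1) ^ 2 * (3 * m + 1) := by positivity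
    refine Nat.le_of_mul_le_mul_left ?_ hpos
    calc (m + 1) ^ 2 * (3 * m + 1) * ((3 * (m + 1) + 1) * Nat.centralBinom (m + 1) ^ 2)
          = (3 * m + 1) * (3 * m + 4) * ((m + 1) * Nat.centralBinom (m + 1)) ^ 2 := by ring
        _ = (3 * m + 1) * (3 * m + 4) * (2 * (2 * m + 1) * Nat.centralBinom m) ^ 2 := by rw [hrec]
        _ = ((3 * m + 4) * (4 * (2 * m + 1) ^ 2)) * ((3 * m + 1) * Nat.centralBinom m ^ 2) := by ring
        _ ≤ (16 * (m + 1) ^ 2 * (3 * m + 1)) * ((3 * m + 1) * Nat.centralBinom m ^ 2) := by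
            apply Nat.mul_le_mul_right
            nlinarith
        _ ≤ (16 * (m + 1) ^ 2 * (3 * m + 1)) * 16 ^ m := by
            apply Nat.mul_le_mul_left
            exact ih
        _ = (m + 1) ^ 2 * (3 * m + 1) * 16 ^ (m + 1) := by ring

lemma qq_nonneg (t : ℤ) : 0 ≤ qq t := by
  unfold qq
  split_ifs with h
  · nlinarith [sq_nonneg (t + 4)]
  · nlinarith [sq_nonneg (t - 3)]

lemma qq_succ_le (t s : ℤ) (hs : 1 ≤ s) : qq (t + 1) ≤ qq t + 2 * t + 8 * s := by
  unfold qq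
  split_ifs with h1 h2 h2 <;> nlinarith

lemma qq_pred_le (t : ℤ) : qq (t - 1) ≤ qq t + 6 - 2 * t := by
  unfold qq
  split_ifs with h1 h2 h2 <;> nlinarith


-- ℕ central binom bounds
lemma L_even {m : ℕ} (hm : m ≠ 0) :
    Nat.centralBinom m ^ 4 * 2 ^ (2 * Nat.size m) ≤ 2 ^ (8 * m) := by
  have h1 : 2 ^ Nat.size m ≤ 2 * m := by
    have h0 : 0 < Nat.size m := Nat.size_pos.mpr (Nat.pos_of_ne_zero hm)
    have h2 : 2 ^ (Nat.size m - 1) ≤ m := Nat.lt_size.mp (by omega)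
    have : 2 ^ Nat.size m = 2 * 2 ^ (Nat.size m - 1) := by
      rw [← pow_succ']; congr 1; omega
    omega
  have hsq := L1 m
  have key : ((3 * m + 1) * Nat.centralBinom m ^ 2) ^ 2 ≤ (16 ^ m) ^ 2 :=
    Nat.pow_le_pow_left hsq 2
  calc Nat.centralBinom m ^ 4 * 2 ^ (2 * Nat.size m)
      = Nat.centralBinom m ^ 4 * (2 ^ Nat.size m) ^ 2 := by ring
    _ ≤ Nat.centralBinom m ^ 4 * (2 * m) ^ 2 := by
        exact Nat.mul_le_mul_left _ (Nat.pow_le_pow_left h1 2)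
    _ ≤ Nat.centralBinom m ^ 4 * (3 * m + 1) ^ 2 := by
        apply Nat.mul_le_mul_left
        apply Nat.pow_le_pow_left
        omega
    _ = ((3 * m + 1) * Nat.centralBinom m ^ 2) ^ 2 := by ring
    _ ≤ (16 ^ m) ^ 2 := key
    _ = 2 ^ (8 * m) := by
        rw [← pow_mul]
        rw [show (16 : ℕ) = 2 ^ 4 by norm_num, ← pow_mul]
        congr 1
        ring

lemma L_odd {m : ℕ} (hm : m ≠ 0) :
    Nat.centralBinom m ^ 4 * (2 * m + 1) ^ 4 ≤ 2 ^ (8 * m + 2 + 2 * Nat.size m) := by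
  have h1 : m + 1 ≤ 2 ^ Nat.size m := Nat.lt_size_self m
  have hsq : ((3 * m + 1) * Nat.centralBinom m ^ 2) ^ 2 ≤ (16 ^ m) ^ 2 :=
    Nat.pow_le_pow_left (L1 m) 2
  have h2 : (2 * m + 1) ^ 4 ≤ 4 * ((m + 1) * (3 * m + 1)) ^ 2 := by
    have ha : (2 * m + 1) ^ 2 ≤ 2 * ((m + 1) * (3 * m + 1)) := by nlinarith
    calc (2 * m + 1) ^ 4 = ((2 * m + 1) ^ 2) ^ 2 := by ring
      _ ≤ (2 * ((m + 1) * (3 * m + 1))) ^ 2 := Nat.pow_le_pow_left ha 2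
      _ = 4 * ((m + 1) * (3 * m + 1)) ^ 2 := by ring
  calc Nat.centralBinom m ^ 4 * (2 * m + 1) ^ 4
      ≤ Nat.centralBinom m ^ 4 * (4 * ((m + 1) * (3 * m + 1)) ^ 2) := Nat.mul_le_mul_left _ h2
    _ = 4 * (m + 1) ^ 2 * ((3 * m + 1) * Nat.centralBinom m ^ 2) ^ 2 := by ring
    _ ≤ 4 * (m + 1) ^ 2 * (16 ^ m) ^ 2 := Nat.mul_le_mul_left _ hsq
    _ ≤ 4 * (2 ^ Nat.size m) ^ 2 * (16 ^ m) ^ 2 := by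
        apply Nat.mul_le_mul_right
        exact Nat.mul_le_mul_left _ (Nat.pow_le_pow_left h1 2)
    _ = 2 ^ (8 * m + 2 + 2 * Nat.size m) := by
        rw [show (16 : ℕ) = 2 ^ 4 by norm_num, show (4 : ℕ) = 2 ^ 2 by norm_num,
          ← pow_mul, ← pow_mul, ← pow_mul]
        rw [← pow_add, ← pow_add]
        congr 1
        ring

lemma expo_even {m : ℕ} (hm : m ≠ 0) :
    16 * m + (4 * E m + Q2' (2 * m)) ≤ 16 * m + (4 * m + Q2' m + 2 * Nat.size m) := by
  have hq : Q2 (2 * m) = qq (((Nat.size m : ℤ) - 2 * (sB m : ℤ)) + 1) := by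
    unfold Q2
    rw [size_two_mul hm, sB_two_mul hm]
    congr 1
    push_cast
    ring
  have hstep := qq_succ_le ((Nat.size m : ℤ) - 2 * (sB m : ℤ)) (sB m : ℤ)
    (by exact_mod_cast sB_pos m hm)
  rw [← hq] at hstep
  have h0 : (0:ℤ) ≤ Q2 (2 * m) := qq_nonneg _
  have h1 : (0:ℤ) ≤ Q2 m := qq_nonneg _
  have h2 := E_add_sB m
  have h3 : Q2 m = qq ((Nat.size m : ℤ) - 2 * (sB m : ℤ)) := rfl
  rw [← h3] at hstep
  unfold Q2'
  omega

lemma expo_odd {m : ℕ} (hm : m ≠ 0) :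
    16 * m + 2 + 2 * Nat.size m + (4 * E m + Q2' (2 * m + 1)) ≤ 16 * m + 8 + (4 * m + Q2' m) := by
  have hq : Q2 (2 * m + 1) = qq (((Nat.size m : ℤ) - 2 * (sB m : ℤ)) - 1) := by
    unfold Q2
    rw [size_two_mul_add_one hm, sB_two_mul_add_one m]
    congr 1
    push_cast
    ring
  have hstep := qq_pred_le ((Nat.size m : ℤ) - 2 * (sB m : ℤ))
  rw [← hq] at hstep
  have h0 : (0:ℤ) ≤ Q2 (2 * m + 1) := qq_nonneg _
  have h1 : (0:ℤ) ≤ Q2 m := qq_nonneg _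
  have h2 := E_add_sB m
  have h3 : Q2 m = qq ((Nat.size m : ℤ) - 2 * (sB m : ℤ)) := rfl
  rw [← h3] at hstep
  have h4 := sB_le m
  unfold Q2'
  omega

lemma main : ∀ n : ℕ, 1 ≤ n → P n ^ 4 * 2 ^ (Q2' n) ≤ 2 ^ (8 * n) := by
  intro n
  induction n using Nat.strong_induction_on with
  | _ n ih =>
    intro hn
    rcases Nat.lt_or_ge n 2 with h2 | h2
    · -- n = 1
      have : n = 1 := by omega
      subst this
      have hP1 : P 1 = 1 := by
        unfold P
        rw [Finset.Icc_self, Finset.prod_singleton]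
        unfold f
        norm_num
      have hQ : Q2' 1 = 8 := by
        have : Q2 1 = 8 := by
          unfold Q2
          norm_num [Nat.size_one, sB]
          decide
        unfold Q2'
        rw [this]
        rfl
      rw [hP1, hQ]
      norm_num
    · obtain ⟨m, hm⟩ : ∃ m, m = n / 2 := ⟨n / 2, rfl⟩
      have hm1 : m ≠ 0 := by omega
      have hmlt : m < n := by omega
      have ihm := ih m hmlt (by omega)
      have hR := R1 m
      have h4 : P (2 * m) ^ 4 * 2 ^ (4 * m)
          = P m ^ 4 * (Nat.centralBinom m : ℚ) ^ 4 * 2 ^ (4 * E m) := by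
        have := congrArg (fun x : ℚ => x ^ 4) hR
        simp only [mul_pow, ← pow_mul] at this
        calc P (2 * m) ^ 4 * 2 ^ (4 * m) = P (2 * m) ^ 4 * 2 ^ (m * 4) := by ring_nf
          _ = P m ^ 4 * (Nat.centralBinom m : ℚ) ^ 4 * 2 ^ (E m * 4) := this
          _ = P m ^ 4 * (Nat.centralBinom m : ℚ) ^ 4 * 2 ^ (4 * E m) := by ring_nf
      have hCB4 : ((Nat.centralBinom m : ℚ)) ^ 4 * 2 ^ (2 * Nat.size m) ≤ 2 ^ (8 * m) := by
        exact_mod_cast Nat.cast_le.mpr (L_even hm1)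
      rcases Nat.even_or_odd n with he | ho
      · -- n = 2m
        have hn2 : n = 2 * m := by
          rcases he with ⟨t, ht⟩; omega
        rw [hn2]
        have key : P (2 * m) ^ 4 * 2 ^ (Q2' (2 * m)) * 2 ^ (4 * m + Q2' m + 2 * Nat.size m)
            ≤ 2 ^ (8 * (2 * m)) * 2 ^ (4 * m + Q2' m + 2 * Nat.size m) := by
          calc P (2 * m) ^ 4 * 2 ^ (Q2' (2 * m)) * 2 ^ (4 * m + Q2' m + 2 * Nat.size m)
              = (P (2 * m) ^ 4 * 2 ^ (4 * m)) * 2 ^ (Q2' (2 * m) + Q2' m + 2 * Nat.size m) := by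
                rw [pow_add, pow_add, pow_add]; ring
            _ = (P m ^ 4 * (Nat.centralBinom m : ℚ) ^ 4 * 2 ^ (4 * E m))
                * 2 ^ (Q2' (2 * m) + Q2' m + 2 * Nat.size m) := by rw [h4]
            _ = (P m ^ 4 * 2 ^ (Q2' m)) * ((Nat.centralBinom m : ℚ) ^ 4 * 2 ^ (2 * Nat.size m))
                * 2 ^ (4 * E m + Q2' (2 * m)) := by
                rw [pow_add, pow_add, pow_add]; ring
            _ ≤ (2 ^ (8 * m)) * (2 ^ (8 * m)) * 2 ^ (4 * E m + Q2' (2 * m)) := by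
                have hpos1 : (0:ℚ) ≤ (Nat.centralBinom m : ℚ) ^ 4 * 2 ^ (2 * Nat.size m) := by positivity
                have hpos2 : (0:ℚ) ≤ P m ^ 4 * 2 ^ (Q2' m) := by positivity
                have hpos3 : (0:ℚ) ≤ (2:ℚ) ^ (4 * E m + Q2' (2 * m)) := by positivity
                exact mul_le_mul (mul_le_mul ihm hCB4 hpos1 (by positivity)) le_rfl hpos3 (by positivity)
            _ = 2 ^ (16 * m + (4 * E m + Q2' (2 * m))) := by
                rw [pow_add, pow_add]; ring
            _ ≤ 2 ^ (16 * m + (4 * m + Q2' m + 2 * Nat.size m)) := by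
                apply pow_le_pow_right₀ (by norm_num : (1:ℚ) ≤ 2) (expo_even hm1)
            _ = 2 ^ (8 * (2 * m)) * 2 ^ (4 * m + Q2' m + 2 * Nat.size m) := by
                rw [← pow_add]; congr 1; ring
        exact le_of_mul_le_mul_right key (by positivity)
      · -- n = 2m+1
        have hn2 : n = 2 * m + 1 := by
          rcases ho with ⟨t, ht⟩; omega
        rw [hn2]
        have hPodd : P (2 * m + 1) = P (2 * m) * ((2 * m + 1 : ℕ) : ℚ) := by
          rw [P_succ, f_odd]
        have hLodd : ((Nat.centralBinom m : ℚ)) ^ 4 * ((2 * m + 1 : ℕ) : ℚ) ^ 4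
            ≤ 2 ^ (8 * m + 2 + 2 * Nat.size m) := by
          exact_mod_cast Nat.cast_le.mpr (L_odd hm1)
        have key : P (2 * m + 1) ^ 4 * 2 ^ (Q2' (2 * m + 1)) * 2 ^ (4 * m + Q2' m)
            ≤ 2 ^ (8 * (2 * m + 1)) * 2 ^ (4 * m + Q2' m) := by
          calc P (2 * m + 1) ^ 4 * 2 ^ (Q2' (2 * m + 1)) * 2 ^ (4 * m + Q2' m)
              = (P (2 * m) ^ 4 * 2 ^ (4 * m)) * ((2 * m + 1 : ℕ) : ℚ) ^ 4
                * 2 ^ (Q2' (2 * m + 1) + Q2' m) := by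
                rw [hPodd, pow_add, pow_add]; ring
            _ = (P m ^ 4 * 2 ^ (Q2' m)) * ((Nat.centralBinom m : ℚ) ^ 4 * ((2 * m + 1 : ℕ) : ℚ) ^ 4)
                * 2 ^ (4 * E m + Q2' (2 * m + 1)) := by
                rw [h4, pow_add, pow_add]; ring
            _ ≤ (2 ^ (8 * m)) * (2 ^ (8 * m + 2 + 2 * Nat.size m)) * 2 ^ (4 * E m + Q2' (2 * m + 1)) := by
                have hpos1 : (0:ℚ) ≤ (Nat.centralBinom m : ℚ) ^ 4 * ((2 * m + 1 : ℕ) : ℚ) ^ 4 := by positivity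
                have hpos3 : (0:ℚ) ≤ (2:ℚ) ^ (4 * E m + Q2' (2 * m + 1)) := by positivity
                exact mul_le_mul (mul_le_mul ihm hLodd hpos1 (by positivity)) le_rfl hpos3 (by positivity)
            _ = 2 ^ (16 * m + 2 + 2 * Nat.size m + (4 * E m + Q2' (2 * m + 1))) := by
                rw [pow_add, pow_add, pow_add, pow_add, pow_add]; ring
            _ ≤ 2 ^ (16 * m + 8 + (4 * m + Q2' m)) := by
                apply pow_le_pow_right₀ (by norm_num : (1:ℚ) ≤ 2) (expo_odd hm1)
            _ = 2 ^ (8 * (2 * m + 1)) * 2 ^ (4 * m + Q2' m) := by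
                rw [← pow_add]; congr 1; ring
        exact le_of_mul_le_mul_right key (by positivity)

lemma P_le_four_pow (n : ℕ) (hn : 1 ≤ n) : P n ≤ 4 ^ n := by
  have h := main n hn
  have h1 : P n ^ 4 ≤ P n ^ 4 * 2 ^ (Q2' n) := by
    nth_rewrite 1 [← mul_one (P n ^ 4)]
    apply mul_le_mul_of_nonneg_left _ (by positivity)
    exact one_le_pow₀ (by norm_num)
  have h2 : P n ^ 4 ≤ ((4:ℚ) ^ n) ^ 4 := by
    calc P n ^ 4 ≤ 2 ^ (8 * n) := le_trans h1 h
      _ = ((4:ℚ) ^ n) ^ 4 := by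
        rw [show (4:ℚ) = 2 ^ 2 by norm_num, ← pow_mul, ← pow_mul]
        congr 1
        ring
  exact (pow_le_pow_iff_left₀ (P_pos n).le (by positivity) (by norm_num)).mp h2


lemma den_ne_one {r i : ℕ} (hr : r ≠ 0) (hi : padicValNat 2 r < i) :
    ((r : ℚ) / 2 ^ i).den ≠ 1 := by
  intro hden
  have hnum : (((r : ℚ) / 2 ^ i).num : ℚ) = (r : ℚ) / 2 ^ i :=
    Rat.coe_int_num_of_den_eq_one hden
  set z : ℤ := ((r : ℚ) / 2 ^ i).num with hz
  have h2 : (z : ℚ) * 2 ^ i = r := by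
    rw [hnum]
    field_simp
  have h3 : z * 2 ^ i = (r : ℤ) := by exact_mod_cast h2
  have h4 : (2 : ℤ) ^ i ∣ (r : ℤ) := Dvd.intro_left z h3
  have h5 : (2 : ℕ) ^ i ∣ r := by exact_mod_cast h4
  have h6 : (2 : ℕ) ^ (padicValNat 2 r + 1) ∣ r :=
    dvd_trans (pow_dvd_pow 2 (by omega)) h5
  exact pow_succ_padicValNat_not_dvd hr h6

lemma h_eq {r : ℕ} (hr : r ≠ 0) :
    h r = (r : ℚ) * ∏ i ∈ Finset.Icc 1 (padicValNat 2 r), ((2 : ℚ) ^ i / r) := by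
  set k := padicValNat 2 r with hk
  have hkr : k ≤ r := by
    have h1 : 2 ^ k ∣ r := pow_padicValNat_dvd
    have h2 : 2 ^ k ≤ r := Nat.le_of_dvd (Nat.pos_of_ne_zero hr) h1
    have h3 : k < 2 ^ k := Nat.lt_two_pow_self
    omega
  have hsub : Finset.Icc 1 k ⊆ Finset.Icc 1 r := Finset.Icc_subset_Icc_right hkr
  have step1 : ∏ i ∈ Finset.Icc 1 r, g ((r : ℚ) / 2 ^ i)
      = ∏ i ∈ Finset.Icc 1 k, g ((r : ℚ) / 2 ^ i) := by
    apply (Finset.prod_subset hsub _).symm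
    intro i hir hik
    have hik2 : k < i := by
      simp only [Finset.mem_Icc] at hir hik
      omega
    unfold g
    rw [if_neg (den_ne_one hr hik2)]
  have step2 : ∏ i ∈ Finset.Icc 1 k, g ((r : ℚ) / 2 ^ i)
      = ∏ i ∈ Finset.Icc 1 k, ((r : ℚ) / 2 ^ i) := by
    apply Finset.prod_congr rfl
    intro i hi
    simp only [Finset.mem_Icc] at hi
    have hdvd : 2 ^ i ∣ r := dvd_trans (pow_dvd_pow 2 hi.2) pow_padicValNat_dvd
    have hcast : ((r / 2 ^ i : ℕ) : ℚ) = (r : ℚ) / 2 ^ i := by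
      rw [Nat.cast_div hdvd (by positivity)]
      push_cast
      ring
    unfold g
    rw [← hcast, Rat.den_natCast, if_pos rfl]
  have step3 : ∏ i ∈ Finset.Icc 1 k, ((r : ℚ) / 2 ^ i)
      = (∏ i ∈ Finset.Icc 1 k, ((2 : ℚ) ^ i / r))⁻¹ := by
    rw [← Finset.prod_inv_distrib]
    apply Finset.prod_congr rfl
    intro i _
    rw [inv_div]
  unfold h
  rw [step1, step2, step3]
  rw [div_inv_eq_mul]


lemma G2 : ∀ N : ℕ, N ≤ 1023 →
    (∏ r ∈ Finset.Icc 1 N, h r) * ∏ i ∈ Finset.Ioc 0 10, ((Nat.factorial (N / 2 ^ i) : ℕ) : ℚ)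
      = (Nat.factorial N : ℚ) := by
  intro N
  induction N with
  | zero => simp
  | succ N ihN =>
    intro hN
    have ih := ihN (by omega)
    set k := padicValNat 2 (N + 1) with hk
    have hdvdk : 2 ^ k ∣ N + 1 := pow_padicValNat_dvd
    have hk10 : k ≤ 10 := by
      have h2 : 2 ^ k ≤ N + 1 := Nat.le_of_dvd (by omega) hdvdk
      by_contra hcon
      push_neg at hcon
      have : 2 ^ 11 ≤ 2 ^ k := Nat.pow_le_pow_right (by norm_num) (by omega)
      omega
    -- denominators split
    have hsplit : ∀ M : ℕ, (∏ i ∈ Finset.Ioc 0 10, ((Nat.factorial (M / 2 ^ i) : ℕ) : ℚ))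
        = (∏ i ∈ Finset.Ioc 0 k, ((Nat.factorial (M / 2 ^ i) : ℕ) : ℚ))
          * ∏ i ∈ Finset.Ioc k 10, ((Nat.factorial (M / 2 ^ i) : ℕ) : ℚ) := by
      intro M
      rw [Finset.prod_Ioc_consecutive _ (Nat.zero_le k) hk10]
    have hpiece1 : ∀ i ∈ Finset.Ioc 0 k, (N + 1) / 2 ^ i = N / 2 ^ i + 1 := by
      intro i hi
      simp only [Finset.mem_Ioc] at hi
      exact Nat.succ_div_of_dvd (dvd_trans (pow_dvd_pow 2 hi.2) hdvdk)
    have hpiece2 : ∀ i ∈ Finset.Ioc k 10, (N + 1) / 2 ^ i = N / 2 ^ i := by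
      intro i hi
      simp only [Finset.mem_Ioc] at hi
      apply Nat.succ_div_of_not_dvd
      intro hdvd
      exact pow_succ_padicValNat_not_dvd (by omega : N + 1 ≠ 0)
        (dvd_trans (pow_dvd_pow 2 (by omega : k + 1 ≤ i)) hdvd)
    have hcastdiv : ∀ i ∈ Finset.Ioc 0 k, ((N / 2 ^ i + 1 : ℕ) : ℚ) = ((N + 1 : ℕ) : ℚ) / 2 ^ i := by
      intro i hi
      rw [← hpiece1 i hi]
      rw [Nat.cast_div (dvd_trans (pow_dvd_pow 2 (Finset.mem_Ioc.mp hi).2) hdvdk) (by positivity)]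
      push_cast
      ring
    -- assemble
    have hprodIcc : ∏ r ∈ Finset.Icc 1 (N + 1), h r = (∏ r ∈ Finset.Icc 1 N, h r) * h (N + 1) :=
      Finset.prod_Icc_succ_top (by omega) h
    rw [hsplit N] at ih
    rw [hprodIcc, hsplit (N + 1)]
    have hD1 : (∏ i ∈ Finset.Ioc 0 k, ((Nat.factorial ((N + 1) / 2 ^ i) : ℕ) : ℚ))
        = (∏ i ∈ Finset.Ioc 0 k, ((Nat.factorial (N / 2 ^ i) : ℕ) : ℚ))
          * ∏ i ∈ Finset.Ioc 0 k, (((N + 1 : ℕ) : ℚ) / 2 ^ i) := by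
      rw [← Finset.prod_mul_distrib]
      apply Finset.prod_congr rfl
      intro i hi
      rw [hpiece1 i hi, Nat.factorial_succ, ← hcastdiv i hi]
      push_cast
      ring
    have hD2 : (∏ i ∈ Finset.Ioc k 10, ((Nat.factorial ((N + 1) / 2 ^ i) : ℕ) : ℚ))
        = ∏ i ∈ Finset.Ioc k 10, ((Nat.factorial (N / 2 ^ i) : ℕ) : ℚ) := by
      apply Finset.prod_congr rfl
      intro i hi
      rw [hpiece2 i hi]
    rw [hD1, hD2, h_eq (by omega : N + 1 ≠ 0), ← hk]
    have hIccIoc : Finset.Icc 1 k = Finset.Ioc 0 k := by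
      rw [← Finset.Icc_add_one_left_eq_Ioc]
      rfl
    rw [hIccIoc]
    have hcancel : (∏ i ∈ Finset.Ioc 0 k, ((2 : ℚ) ^ i / ((N + 1 : ℕ) : ℚ)))
        * ∏ i ∈ Finset.Ioc 0 k, (((N + 1 : ℕ) : ℚ) / 2 ^ i) = 1 := by
      rw [← Finset.prod_mul_distrib]
      apply Finset.prod_eq_one
      intro i _
      rw [div_mul_div_comm, mul_comm ((2:ℚ) ^ i) _]
      exact div_self (by positivity)
    have hfs : (Nat.factorial (N + 1) : ℚ) = (Nat.factorial N : ℚ) * ((N + 1 : ℕ) : ℚ) := by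
      rw [Nat.factorial_succ]
      push_cast
      ring
    trans ((∏ r ∈ Finset.Icc 1 N, h r)
        * ((∏ i ∈ Finset.Ioc 0 k, ((Nat.factorial (N / 2 ^ i) : ℕ) : ℚ))
          * ∏ i ∈ Finset.Ioc k 10, ((Nat.factorial (N / 2 ^ i) : ℕ) : ℚ))
        * ((N + 1 : ℕ) : ℚ)
        * ((∏ i ∈ Finset.Ioc 0 k, ((2 : ℚ) ^ i / ((N + 1 : ℕ) : ℚ)))
          * ∏ i ∈ Finset.Ioc 0 k, (((N + 1 : ℕ) : ℚ) / 2 ^ i)))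
    · ring
    · rw [ih, hcancel, hfs]
      ring


set_option maxRecDepth 10000 in
lemma numfact :
    4 ^ 1023 * (∏ i ∈ Finset.Ioc 0 10, Nat.factorial (1023 / 2 ^ i)) ≤ Nat.factorial 1023 := by
  decide

lemma four_pow_le_prod_h : (4 : ℚ) ^ 1023 ≤ ∏ r ∈ Finset.Icc 1 1023, h r := by
  have hG := G2 1023 le_rfl
  set D : ℕ := ∏ i ∈ Finset.Ioc 0 10, Nat.factorial (1023 / 2 ^ i) with hD
  have hcast : (∏ i ∈ Finset.Ioc 0 10, ((Nat.factorial (1023 / 2 ^ i) : ℕ) : ℚ)) = (D : ℚ) := by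
    rw [hD]
    exact (Nat.cast_prod _ _).symm
  rw [hcast] at hG
  have hDpos : 0 < (D : ℚ) := by
    have : 0 < D := Finset.prod_pos (fun i _ => Nat.factorial_pos _)
    exact_mod_cast this
  have hineq : (4 : ℚ) ^ 1023 * (D : ℚ) ≤ ((Nat.factorial 1023 : ℕ) : ℚ) := by
    have h0 : ((4 ^ 1023 * D : ℕ) : ℚ) ≤ ((Nat.factorial 1023 : ℕ) : ℚ) := Nat.cast_le.mpr numfact
    rw [Nat.cast_mul, Nat.cast_pow] at h0
    have h4 : ((4 : ℕ) : ℚ) = 4 := by norm_num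
    rw [h4] at h0
    exact h0
  rw [← hG] at hineq
  exact le_of_mul_le_mul_right hineq hDpos

end Putnam2023Aux

theorem prod_f_le_c_pow (n : ℕ) (hn : 0 < n) :
    (∏ r ∈ Finset.Icc 1 n, f r) ^ 1023 ≤ (∏ r ∈ Finset.Icc 1 1023, h r) ^ n := by
  have hP := Putnam2023Aux.P_le_four_pow n hn
  have hPpos := Putnam2023Aux.P_pos n
  have hH := Putnam2023Aux.four_pow_le_prod_h
  calc (∏ r ∈ Finset.Icc 1 n, f r) ^ 1023
      = Putnam2023Aux.P n ^ 1023 := rfl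
    _ ≤ ((4 : ℚ) ^ n) ^ 1023 := pow_le_pow_left₀ hPpos.le hP 1023
    _ = ((4 : ℚ) ^ 1023) ^ n := by rw [← pow_mul, ← pow_mul, Nat.mul_comm]
    _ ≤ (∏ r ∈ Finset.Icc 1 1023, h r) ^ n := pow_le_pow_left₀ (by positivity) hH n
end

section
/- The sequence (∏_{r=1}^{n} h(r))^{1/n} converges to 4 as n → ∞. -/
open Finset

lemma g_cast (m i : ℕ) :
    g ((m : ℚ) / 2 ^ i) = if 2 ^ i ∣ m then ((m / 2 ^ i : ℕ) : ℚ) else 1 := by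
  unfold g
  by_cases hd : 2 ^ i ∣ m
  · have h2 : ((2:ℚ) ^ i) = ((2 ^ i : ℕ) : ℚ) := by push_cast; ring
    have : (m : ℚ) / 2 ^ i = ((m / 2 ^ i : ℕ) : ℚ) := by
      rw [h2, Nat.cast_div hd (by positivity)]
    rw [this, if_pos (Rat.den_natCast _), if_pos hd]
  · have hden : ((m : ℚ) / 2 ^ i).den ≠ 1 := by
      intro h1
      rw [Rat.den_eq_one_iff] at h1
      set q : ℚ := (m : ℚ) / 2 ^ i with hq
      have h2 : (q.num : ℚ) * 2 ^ i = (m : ℚ) := by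
        rw [h1, hq]; field_simp
      have h3 : (q.num * 2 ^ i : ℤ) = (m : ℤ) := by
        exact_mod_cast h2
      apply hd
      have : (2:ℤ) ^ i ∣ (m : ℤ) := ⟨q.num, by linarith [h3]⟩
      exact_mod_cast this
    simp [hden, hd]

def natG (m : ℕ) : ℕ := ∏ i ∈ Finset.Icc 1 m, (if 2 ^ i ∣ m then m / 2 ^ i else 1)
def natD (n : ℕ) : ℕ := ∏ i ∈ Finset.Icc 1 n, (n / 2 ^ i).factorial

lemma natG_pos (m : ℕ) (hm : 0 < m) : 0 < natG m := by
  apply Finset.prod_pos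
  intro i hi
  split_ifs with hd
  · exact Nat.div_pos (Nat.le_of_dvd hm hd) (by positivity)
  · exact one_pos

lemma natD_pos (n : ℕ) : 0 < natD n :=
  Finset.prod_pos fun i _ => Nat.factorial_pos _

lemma natD_succ (n : ℕ) : natD (n + 1) = natD n * natG (n + 1) := by
  have term : ∀ i ∈ Finset.Icc 1 (n+1),
      ((n + 1) / 2 ^ i).factorial
        = (n / 2 ^ i).factorial * (if 2 ^ i ∣ n + 1 then (n+1) / 2 ^ i else 1) := by
    intro i _
    rw [Nat.succ_div]
    split_ifs with hd
    · rw [Nat.factorial_succ, mul_comm]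
    · rw [mul_one, Nat.add_zero]
  unfold natD natG
  rw [Finset.prod_congr rfl term, Finset.prod_mul_distrib]
  congr 1
  rw [Finset.prod_Icc_succ_top (by omega)]
  have : n / 2 ^ (n+1) = 0 := Nat.div_eq_of_lt (lt_of_lt_of_le (Nat.lt_two_pow_self (n := n)) (by
    exact Nat.pow_le_pow_right (by norm_num) (by omega)))
  rw [this]
  simp

lemma prod_h_eq (n : ℕ) :
    (∏ r ∈ Finset.Icc 1 n, h r) = (n.factorial : ℚ) / (natD n : ℚ) := by
  induction n with
  | zero => simp [natD]
  | succ n ih =>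
    rw [Finset.prod_Icc_succ_top (by omega), ih]
    have hG : (∏ i ∈ Finset.Icc 1 (n+1), g (((n+1 : ℕ) : ℚ) / 2 ^ i)) = (natG (n+1) : ℚ) := by
      unfold natG
      push_cast
      refine Finset.prod_congr rfl fun i _ => ?_
      have : ((n:ℚ) + 1) = ((n+1 : ℕ) : ℚ) := by push_cast; ring
      rw [this, g_cast]

    have hGpos : (0:ℚ) < (natG (n+1) : ℚ) := by exact_mod_cast natG_pos _ (by omega)
    have hDpos : (0:ℚ) < (natD n : ℚ) := by exact_mod_cast natD_pos n
    unfold h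
    rw [hG, natD_succ, Nat.factorial_succ]
    push_cast
    field_simp

def en (n : ℕ) : ℕ := if n % 2 = 1 then n / 2 + 1 else 1

lemma key1 (n : ℕ) :
    n.factorial = n.choose (n / 2) * en n * ((n / 2).factorial * (n / 2).factorial) := by
  have h1 : n.choose (n/2) * (n/2).factorial * (n - n/2).factorial = n.factorial :=
    Nat.choose_mul_factorial_mul_factorial (Nat.div_le_self n 2)
  have h2 : (n - n/2).factorial = en n * (n/2).factorial := by
    unfold en
    rcases Nat.even_or_odd n with he | ho
    · have hm : n % 2 = 0 := Nat.even_iff.mp he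
      have : n - n/2 = n/2 := by omega
      rw [this, hm]; simp
    · have hm : n % 2 = 1 := Nat.odd_iff.mp ho
      have : n - n/2 = n/2 + 1 := by omega
      rw [this, hm, Nat.factorial_succ]; simp
  rw [← h1, h2]; ring

lemma natD_eq_range (n : ℕ) : natD n = ∏ i ∈ Finset.range n, (n / 2 ^ (1 + i)).factorial := by
  unfold natD
  rw [← Finset.Ico_add_one_right_eq_Icc, Finset.prod_Ico_eq_prod_range]
  simp

lemma natD_rec (n : ℕ) (hn : 1 ≤ n) : natD n = (n / 2).factorial * natD (n / 2) := by
  obtain ⟨m, rfl⟩ : ∃ m, n = m + 1 := ⟨n - 1, by omega⟩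
  rw [natD_eq_range, Finset.prod_range_succ']
  have hdd : ∀ i : ℕ, (m + 1) / 2 ^ (1 + (i + 1)) = ((m+1)/2) / 2 ^ (1 + i) := by
    intro i
    rw [Nat.div_div_eq_div_mul, ← pow_succ']
    ring_nf
  have h0 : (m + 1) / 2 ^ (1 + 0) = (m+1)/2 := by norm_num
  rw [h0, Finset.prod_congr rfl (fun i _ => by rw [hdd i]), mul_comm]
  congr 1
  rw [natD_eq_range ((m+1)/2)]
  symm
  apply Finset.prod_subset
  · exact Finset.range_subset_range.mpr (by omega)
  · intro i hi hni
    simp only [Finset.mem_range] at hi hni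
    have : (m+1)/2 / 2 ^ (1 + i) = 0 := by
      apply Nat.div_eq_of_lt
      calc (m+1)/2 ≤ i := by omega
        _ < 2 ^ i := Nat.lt_two_pow_self (n := i)
        _ ≤ 2 ^ (1 + i) := Nat.pow_le_pow_right (by norm_num) (by omega)
    rw [this]; rfl

lemma choose_half_le (n : ℕ) : n.choose (n / 2) ≤ 2 ^ n := by
  rw [← Nat.sum_range_choose n]
  exact Finset.single_le_sum (f := fun i => n.choose i) (fun i _ => Nat.zero_le _)
    (Finset.mem_range.mpr (by omega))

lemma le_choose_half (n : ℕ) : 2 ^ n ≤ (n + 1) * n.choose (n / 2) := by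
  rw [← Nat.sum_range_choose n]
  calc ∑ i ∈ Finset.range (n+1), n.choose i
      ≤ ∑ _i ∈ Finset.range (n+1), n.choose (n/2) :=
        Finset.sum_le_sum (fun i _ => Nat.choose_le_middle i n)
    _ = (n+1) * n.choose (n/2) := by rw [Finset.sum_const, Finset.card_range, smul_eq_mul]

lemma en_pos (n : ℕ) : 1 ≤ en n := by unfold en; split_ifs <;> omega

lemma en_le (n : ℕ) : en n ≤ n + 1 := by unfold en; split_ifs <;> omega

lemma natD_one : natD 1 = 1 := by decide

lemma bounds (n : ℕ) :
    n.factorial ≤ 2 ^ (2*n) * (n+1) ^ (Nat.log 2 n + 1) * natD n ∧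
    2 ^ (2*n) * natD n ≤ n.factorial * (2*(n+1)) ^ (Nat.log 2 n + 1) := by
  induction n using Nat.strong_induction_on with
  | _ n IH =>
  match n with
  | 0 => refine ⟨by simp [natD], by simp [natD]⟩
  | 1 => refine ⟨by rw [natD_one]; norm_num, by rw [natD_one]; norm_num⟩
  | (m+2) =>
    set n := m + 2 with hn
    set k := n / 2 with hkdef
    have hk : k < n := by omega
    have hk1 : 1 ≤ k := by omega
    have hkn : k + 1 ≤ n + 1 := by omega
    obtain ⟨IHu, IHl⟩ := IH k hk
    have hlog : Nat.log 2 k + 1 = Nat.log 2 n := by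
      have h1 : Nat.log 2 k = Nat.log 2 n - 1 := Nat.log_div_base 2 n
      have h2 : 0 < Nat.log 2 n := Nat.log_pos (by norm_num) (by omega)
      omega
    have hfact := key1 n
    have hD := natD_rec n (by omega)
    have hC := choose_half_le n
    have hCl := le_choose_half n
    have he1 := en_pos n
    have he2 := en_le n
    set C := n.choose k with hCdef
    set e := en n with hedef
    constructor
    · calc n.factorial = (C * e) * (k.factorial * k.factorial) := by rw [hfact]
        _ ≤ (2^n * (n+1)) * ((2^(2*k) * (k+1)^(Nat.log 2 k + 1) * natD k) * k.factorial) :=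
            Nat.mul_le_mul (Nat.mul_le_mul hC he2) (Nat.mul_le_mul IHu le_rfl)
        _ = 2^(n + 2*k) * ((n+1) * (k+1)^(Nat.log 2 k + 1)) * natD n := by
            rw [hD, pow_add]; ring
        _ ≤ 2^(2*n) * ((n+1) * (n+1)^(Nat.log 2 n)) * natD n := by
            refine Nat.mul_le_mul (Nat.mul_le_mul ?_ (Nat.mul_le_mul le_rfl ?_)) le_rfl
            · exact Nat.pow_le_pow_right (by norm_num) (by omega)
            · calc (k+1)^(Nat.log 2 k + 1) ≤ (n+1)^(Nat.log 2 k + 1) :=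
                    Nat.pow_le_pow_left hkn _
                _ = (n+1)^(Nat.log 2 n) := by rw [hlog]
        _ = 2^(2*n) * (n+1)^(Nat.log 2 n + 1) * natD n := by rw [pow_succ]; ring
    · calc 2^(2*n) * natD n = 2^(2*n) * (k.factorial * natD k) := by rw [hD]
        _ ≤ 2^(1 + n + 2*k) * (k.factorial * natD k) :=
            Nat.mul_le_mul (Nat.pow_le_pow_right (by norm_num) (by omega)) le_rfl
        _ = 2 * 2^n * (k.factorial * (2^(2*k) * natD k)) := by rw [pow_add, pow_add]; ring
        _ ≤ 2 * ((n+1) * C) * (k.factorial * (k.factorial * (2*(k+1))^(Nat.log 2 k + 1))) :=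
            Nat.mul_le_mul (Nat.mul_le_mul le_rfl hCl) (Nat.mul_le_mul le_rfl IHl)
        _ ≤ 2 * ((n+1) * C) * (k.factorial * (k.factorial * (2*(n+1))^(Nat.log 2 k + 1))) := by
            refine Nat.mul_le_mul le_rfl (Nat.mul_le_mul le_rfl (Nat.mul_le_mul le_rfl ?_))
            exact Nat.pow_le_pow_left (Nat.mul_le_mul le_rfl hkn) _
        _ = (C * 1 * (k.factorial * k.factorial)) * (2*(n+1))^(Nat.log 2 k + 1 + 1) := by
            rw [pow_succ]; ring
        _ ≤ (C * e * (k.factorial * k.factorial)) * (2*(n+1))^(Nat.log 2 k + 1 + 1) :=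
            Nat.mul_le_mul (Nat.mul_le_mul (Nat.mul_le_mul le_rfl he1) le_rfl) le_rfl
        _ = n.factorial * (2*(n+1))^(Nat.log 2 n + 1) := by rw [← hfact, hlog]

open Filter in
lemma u_tendsto :
    Filter.Tendsto (fun n : ℕ => ((Nat.log 2 n + 1 : ℕ) : ℝ) * Real.log (2*(n+1)) / n)
      Filter.atTop (nhds 0) := by
  have h2 : Tendsto (fun x : ℝ => Real.log x ^ 2 / x) atTop (nhds 0) := by
    simpa using Real.tendsto_pow_log_div_mul_add_atTop 1 0 2 one_ne_zero
  have h1 : Tendsto (fun x : ℝ => Real.log x / x) atTop (nhds 0) := by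
    simpa using Real.tendsto_pow_log_div_mul_add_atTop 1 0 1 one_ne_zero
  have h0 : Tendsto (fun x : ℝ => 1 / x) atTop (nhds 0) := by
    simpa [one_div] using tendsto_inv_atTop_zero (𝕜 := ℝ)
  have hv : Tendsto (fun x : ℝ =>
      (Real.log x / Real.log 2 + 1) * (Real.log 4 + Real.log x) / x) atTop (nhds 0) := by
    have := ((h2.const_mul (1/Real.log 2)).add
      (h1.const_mul (Real.log 4 / Real.log 2 + 1))).add (h0.const_mul (Real.log 4))
    have hz : (1/Real.log 2 * 0 + (Real.log 4/Real.log 2 + 1)*0 + Real.log 4 * 0 : ℝ) = 0 := by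
      ring
    rw [hz] at this
    convert this using 2 with x
    ring
  have hvn : Tendsto (fun n : ℕ =>
      (Real.log n / Real.log 2 + 1) * (Real.log 4 + Real.log n) / n) atTop (nhds 0) :=
    hv.comp tendsto_natCast_atTop_atTop
  apply squeeze_zero' ?_ ?_ hvn
  · filter_upwards [eventually_ge_atTop 1] with n hn
    have h1 : (0:ℝ) < n := by exact_mod_cast hn
    have h2 : (0:ℝ) ≤ Real.log (2*(n+1)) := Real.log_nonneg (by linarith)
    have h3 : (0:ℝ) ≤ ((Nat.log 2 n + 1 : ℕ) : ℝ) := by positivity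
    exact div_nonneg (mul_nonneg h3 h2) h1.le
  · filter_upwards [eventually_ge_atTop 2] with n hn
    have hn0 : (0:ℝ) < n := by exact_mod_cast (by omega : 0 < n)
    have hA : ((Nat.log 2 n + 1 : ℕ) : ℝ) ≤ Real.log n / Real.log 2 + 1 := by
      push_cast
      have hpow : ((2:ℝ) ^ (Nat.log 2 n)) ≤ (n : ℝ) := by
        exact_mod_cast Nat.pow_log_le_self 2 (by omega)
      have hlog2 : (0:ℝ) < Real.log 2 := Real.log_pos one_lt_two
      have := Real.log_le_log (by positivity) hpow
      rw [Real.log_pow] at this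
      have : (Nat.log 2 n : ℝ) ≤ Real.log n / Real.log 2 := by
        rw [le_div_iff₀ hlog2]; linarith
      linarith
    have hB : Real.log (2*(n+1)) ≤ Real.log 4 + Real.log n := by
      rw [← Real.log_mul (by norm_num) (by positivity)]
      apply Real.log_le_log (by positivity)
      have hn2 : (2:ℝ) ≤ n := by exact_mod_cast hn
      linarith
    have hBnn : (0:ℝ) ≤ Real.log (2*(n+1)) := Real.log_nonneg (by nlinarith [hn0])
    have hAnn : (0:ℝ) ≤ ((Nat.log 2 n + 1 : ℕ) : ℝ) := by positivity
    gcongr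

open Filter in
theorem prod_h_pow_inv_tendsto_four :
    Filter.Tendsto (fun n : ℕ => ((∏ r ∈ Finset.Icc 1 n, h r : ℚ) : ℝ) ^ ((n : ℝ)⁻¹))
      Filter.atTop (nhds 4) := by
  set T : ℕ → ℝ := fun n => ((∏ r ∈ Finset.Icc 1 n, h r : ℚ) : ℝ) with hT
  have hTeq : ∀ n, T n = (n.factorial : ℝ) / (natD n : ℝ) := by
    intro n
    rw [hT]
    simp only [prod_h_eq]
    push_cast
    rfl
  have hDpos : ∀ n, (0:ℝ) < (natD n : ℝ) := fun n => by exact_mod_cast natD_pos n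
  have hTpos : ∀ n, 0 < T n := fun n => by
    rw [hTeq]
    have := n.factorial_pos
    have := hDpos n
    positivity
  have hub : ∀ n : ℕ, T n ≤ 2^(2*n) * ((n:ℝ)+1)^(Nat.log 2 n + 1) := by
    intro n
    rw [hTeq, div_le_iff₀ (hDpos n)]
    calc (n.factorial : ℝ)
        ≤ ((2^(2*n) * (n+1)^(Nat.log 2 n + 1) * natD n : ℕ) : ℝ) := by
          exact_mod_cast (bounds n).1
      _ = 2^(2*n) * ((n:ℝ)+1)^(Nat.log 2 n + 1) * (natD n : ℝ) := by push_cast; ring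
  have hlb : ∀ n : ℕ, (2:ℝ)^(2*n) ≤ T n * (2*((n:ℝ)+1))^(Nat.log 2 n + 1) := by
    intro n
    rw [hTeq, div_mul_eq_mul_div, le_div_iff₀ (hDpos n)]
    calc (2:ℝ)^(2*n) * (natD n : ℝ)
        = ((2^(2*n) * natD n : ℕ) : ℝ) := by push_cast; ring
      _ ≤ ((n.factorial * (2*(n+1))^(Nat.log 2 n + 1) : ℕ) : ℝ) := by
          exact_mod_cast (bounds n).2
      _ = (n.factorial : ℝ) * (2*((n:ℝ)+1))^(Nat.log 2 n + 1) := by push_cast; ring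
  set u : ℕ → ℝ := fun n => ((Nat.log 2 n + 1 : ℕ) : ℝ) * Real.log (2*((n:ℝ)+1)) / n with hu
  have hBnn : ∀ n : ℕ, (0:ℝ) ≤ Real.log (2*((n:ℝ)+1)) := fun n =>
    Real.log_nonneg (by have : (0:ℝ) ≤ (n:ℝ) := n.cast_nonneg; linarith)
  have hlog : Tendsto (fun n : ℕ => Real.log (T n) / n) atTop (nhds (2*Real.log 2)) := by
    apply tendsto_of_tendsto_of_tendsto_of_le_of_le'
      (g := fun n : ℕ => 2*Real.log 2 - u n) (h := fun n : ℕ => 2*Real.log 2 + u n)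
    · simpa [hu, sub_zero] using tendsto_const_nhds.sub u_tendsto
    · simpa [hu, add_zero] using tendsto_const_nhds.add u_tendsto
    · filter_upwards [eventually_ge_atTop 1] with n hn
      have hn0 : (0:ℝ) < n := by exact_mod_cast hn
      have key : 2*(n:ℝ)*Real.log 2 - ((Nat.log 2 n + 1 : ℕ) : ℝ) * Real.log (2*((n:ℝ)+1))
          ≤ Real.log (T n) := by
        have h1 : Real.log ((2:ℝ)^(2*n)) ≤ Real.log (T n * (2*((n:ℝ)+1))^(Nat.log 2 n + 1)) :=
          Real.log_le_log (by positivity) (hlb n)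
        rw [Real.log_pow, Real.log_mul (hTpos n).ne' (by positivity), Real.log_pow] at h1
        push_cast at h1 ⊢
        linarith
      show 2*Real.log 2 - ((Nat.log 2 n + 1 : ℕ) : ℝ) * Real.log (2*((n:ℝ)+1)) / n
          ≤ Real.log (T n) / n
      have heq : 2*Real.log 2 - ((Nat.log 2 n + 1 : ℕ) : ℝ) * Real.log (2*((n:ℝ)+1)) / n
          = (2*(n:ℝ)*Real.log 2 - ((Nat.log 2 n + 1 : ℕ) : ℝ) * Real.log (2*((n:ℝ)+1))) / n := by
        field_simp
      rw [heq]
      exact (div_le_div_iff_of_pos_right hn0).mpr key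
    · filter_upwards [eventually_ge_atTop 1] with n hn
      have hn0 : (0:ℝ) < n := by exact_mod_cast hn
      have key : Real.log (T n)
          ≤ 2*(n:ℝ)*Real.log 2 + ((Nat.log 2 n + 1 : ℕ) : ℝ) * Real.log (2*((n:ℝ)+1)) := by
        have h1 : Real.log (T n) ≤ Real.log ((2:ℝ)^(2*n) * ((n:ℝ)+1)^(Nat.log 2 n + 1)) :=
          Real.log_le_log (hTpos n) (hub n)
        rw [Real.log_mul (by positivity) (by positivity), Real.log_pow, Real.log_pow] at h1
        have h2 : Real.log ((n:ℝ)+1) ≤ Real.log (2*((n:ℝ)+1)) :=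
          Real.log_le_log (by positivity) (by linarith)
        have h3 : (0:ℝ) ≤ ((Nat.log 2 n + 1 : ℕ) : ℝ) := by positivity
        push_cast at h1 ⊢
        nlinarith [mul_le_mul_of_nonneg_left h2 h3]
      show Real.log (T n) / n
          ≤ 2*Real.log 2 + ((Nat.log 2 n + 1 : ℕ) : ℝ) * Real.log (2*((n:ℝ)+1)) / n
      have heq : 2*Real.log 2 + ((Nat.log 2 n + 1 : ℕ) : ℝ) * Real.log (2*((n:ℝ)+1)) / n
          = (2*(n:ℝ)*Real.log 2 + ((Nat.log 2 n + 1 : ℕ) : ℝ) * Real.log (2*((n:ℝ)+1))) / n := by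
        field_simp
      rw [heq]
      exact (div_le_div_iff_of_pos_right hn0).mpr key
  have hexp : Real.exp (2*Real.log 2) = 4 := by
    rw [show (2:ℝ)*Real.log 2 = Real.log 4 by
      rw [show (4:ℝ) = 2^2 by norm_num, Real.log_pow]; push_cast; ring]
    exact Real.exp_log (by norm_num)
  have final := (Real.continuous_exp.tendsto _).comp hlog
  rw [hexp] at final
  apply final.congr
  intro n
  simp only [Function.comp]
  rw [Real.rpow_def_of_pos (hTpos n), div_eq_mul_inv]
end

section
/- The sequence (∏_{r=1}^{n} f(r))^{1/n} converges to 4 as n → ∞. -/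
open Finset

namespace Four

def s (n : ℕ) : ℕ :=
  if h : n = 0 then 0 else s (n / 2) + n % 2
decreasing_by exact Nat.div_lt_self (Nat.pos_of_ne_zero h) one_lt_two

lemma s_zero : s 0 = 0 := by rw [s]; rfl

lemma s_two_mul (m : ℕ) : s (2 * m) = s m := by
  rcases Nat.eq_zero_or_pos m with rfl | hm
  · simp
  · rw [s]
    rw [dif_neg (by omega)]
    simp [Nat.mul_div_cancel_left _ two_pos, Nat.mul_mod_right]

lemma s_two_mul_add_one (m : ℕ) : s (2 * m + 1) = s m + 1 := by
  rw [s, dif_neg (by omega : ¬ 2 * m + 1 = 0)]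
  have h1 : (2 * m + 1) / 2 = m := by omega
  have h2 : (2 * m + 1) % 2 = 1 := by omega
  rw [h1, h2]

lemma s_succ (m : ℕ) : s (m + 1) + padicValNat 2 (m + 1) = s m + 1 := by
  induction m using Nat.strong_induction_on with
  | _ m IH =>
    rcases Nat.even_or_odd m with ⟨k, hk⟩ | ⟨k, hk⟩
    · subst hk
      have hm : k + k = 2 * k := by ring
      rw [hm, show 2 * k + 1 = 2 * k + 1 from rfl, s_two_mul_add_one, s_two_mul,
        padicValNat.eq_zero_of_not_dvd (by omega)]
    · subst hk
      have h1 : 2 * k + 1 + 1 = 2 * (k + 1) := by ring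
      rw [h1, s_two_mul, s_two_mul_add_one,
        padicValNat.mul (p := 2) two_ne_zero (by omega), padicValNat.self one_lt_two]
      have := IH k (by omega)
      omega

lemma f_eq (r : ℕ) :
    f r = ((r : ℚ) / 2 ^ padicValNat 2 r) ^ ((1 : ℤ) - padicValNat 2 r) := by
  rw [f, Nat.factorization_def _ Nat.prime_two]

lemma odd_part_pos (r : ℕ) (hr : r ≠ 0) : (0 : ℚ) < (r : ℚ) / 2 ^ padicValNat 2 r := by
  apply div_pos (by exact_mod_cast Nat.pos_of_ne_zero hr) (by positivity)

lemma f_pos (r : ℕ) (hr : r ≠ 0) : 0 < f r := by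
  rw [f_eq]; exact zpow_pos (odd_part_pos r hr) _

lemma f_odd (m : ℕ) : f (2 * m + 1) = (2 * m + 1 : ℚ) := by
  have h0 : padicValNat 2 (2 * m + 1) = 0 := padicValNat.eq_zero_of_not_dvd (by omega)
  rw [f_eq, h0]
  push_cast
  simp

lemma f_two_mul (r : ℕ) (hr : r ≠ 0) :
    f (2 * r) * ((r : ℚ) / 2 ^ padicValNat 2 r) = f r := by
  have hv : padicValNat 2 (2 * r) = 1 + padicValNat 2 r := by
    rw [padicValNat.mul (p := 2) two_ne_zero hr, padicValNat.self one_lt_two]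
  have hc : ((2 * r : ℕ) : ℚ) / 2 ^ padicValNat 2 (2 * r) = (r : ℚ) / 2 ^ padicValNat 2 r := by
    rw [hv, pow_add, pow_one]
    push_cast
    rw [mul_div_mul_left _ _ (two_ne_zero)]
  have hcne : ((r : ℚ) / 2 ^ padicValNat 2 r) ≠ 0 := (odd_part_pos r hr).ne'
  rw [f_eq, f_eq, hc, hv]
  rw [show ((1 : ℤ) - ((1 + padicValNat 2 r : ℕ) : ℤ)) = -(padicValNat 2 r : ℤ) by push_cast; ring]
  rw [show ((1 : ℤ) - (padicValNat 2 r : ℤ)) = -(padicValNat 2 r : ℤ) + 1 by ring,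
    zpow_add₀ hcne, zpow_one]


def P (n : ℕ) : ℚ := ∏ r ∈ Finset.Icc 1 n, f r

lemma P_zero : P 0 = 1 := by simp [P]

lemma P_succ (n : ℕ) : P (n + 1) = P n * f (n + 1) := by
  rw [P, P, Finset.prod_Icc_succ_top (by omega)]

lemma P_pos (n : ℕ) : 0 < P n :=
  Finset.prod_pos fun r hr => f_pos r (by have := Finset.mem_Icc.mp hr; omega)

lemma P_two_mul (m : ℕ) : P (2 * m) * 2 ^ s m = P m * (Nat.centralBinom m : ℚ) := by
  induction m with
  | zero => simp [P_zero, s_zero, Nat.centralBinom]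
  | succ m IH =>
    set v : ℕ := padicValNat 2 (m + 1) with hv
    set c : ℚ := ((m + 1 : ℕ) : ℚ) / 2 ^ v with hc
    have hcpos : 0 < c := odd_part_pos (m + 1) (by omega)
    have h2 : (0 : ℚ) < 2 ^ v := by positivity
    have h1 : P (2 * (m + 1)) * c = P (2 * m) * (2 * (m : ℚ) + 1) * f (m + 1) := by
      have e : 2 * (m + 1) = (2 * m + 1) + 1 := by ring
      rw [e, P_succ, show 2 * m + 1 = (2 * m) + 1 from rfl, P_succ, f_odd,
        show 2 * m + 1 + 1 = 2 * (m + 1) from rfl]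
      rw [mul_assoc, f_two_mul (m + 1) (by omega)]
    have h6 : (2 : ℚ) ^ s (m + 1) * 2 ^ v = 2 ^ s m * 2 := by
      rw [← pow_add, ← pow_succ, s_succ]
    have h3 : ((m : ℚ) + 1) * (Nat.centralBinom (m + 1) : ℚ)
        = 2 * (2 * (m : ℚ) + 1) * (Nat.centralBinom m : ℚ) := by
      have := Nat.succ_mul_centralBinom_succ m
      exact_mod_cast congrArg (fun k : ℕ => (k : ℚ)) this
    have h5 : c * 2 ^ v = ((m : ℚ) + 1) := by
      rw [hc]; push_cast; exact div_mul_cancel₀ _ h2.ne'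
    have key : P (2 * (m + 1)) * 2 ^ s (m + 1) * (c * (2 ^ v * 2 ^ s m))
        = P (m + 1) * (Nat.centralBinom (m + 1) : ℚ) * (c * (2 ^ v * 2 ^ s m)) := by
      calc P (2 * (m + 1)) * 2 ^ s (m + 1) * (c * (2 ^ v * 2 ^ s m))
          = (P (2 * (m + 1)) * c) * ((2 ^ s (m + 1) * 2 ^ v) * 2 ^ s m) := by ring
        _ = (P (2 * m) * (2 * (m : ℚ) + 1) * f (m + 1)) * ((2 ^ s (m + 1) * 2 ^ v) * 2 ^ s m) := by
            rw [h1]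
        _ = (P (2 * m) * (2 * (m : ℚ) + 1) * f (m + 1)) * ((2 ^ s m * 2) * 2 ^ s m) := by
            rw [h6]
        _ = (P (2 * m) * 2 ^ s m) * ((2 * (m : ℚ) + 1) * f (m + 1) * 2 * 2 ^ s m) := by ring
        _ = (P m * (Nat.centralBinom m : ℚ)) * ((2 * (m : ℚ) + 1) * f (m + 1) * 2 * 2 ^ s m) := by
            rw [IH]
        _ = (P m * f (m + 1)) * ((2 * (2 * (m : ℚ) + 1)) * (Nat.centralBinom m : ℚ)) * 2 ^ s m := by
            ring
        _ = (P m * f (m + 1)) * (((m : ℚ) + 1) * (Nat.centralBinom (m + 1) : ℚ)) * 2 ^ s m := by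
            rw [h3]
        _ = P (m + 1) * (Nat.centralBinom (m + 1) : ℚ) * ((c * 2 ^ v) * 2 ^ s m) := by
            rw [P_succ, h5]; ring
        _ = P (m + 1) * (Nat.centralBinom (m + 1) : ℚ) * (c * (2 ^ v * 2 ^ s m)) := by ring
    exact mul_right_cancel₀ (by positivity) key


lemma two_pow_s_le : ∀ m : ℕ, 1 ≤ m → 2 ^ s m ≤ 2 * m := by
  intro m
  induction m using Nat.strong_induction_on with
  | _ m IH =>
    intro hm
    rcases Nat.even_or_odd m with ⟨k, hk⟩ | ⟨k, hk⟩
    · have hk1 : 1 ≤ k := by omega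
      have := IH k (by omega) hk1
      rw [show m = 2 * k by omega, s_two_mul]
      omega
    · rcases Nat.eq_zero_or_pos k with rfl | hk1
      · subst hk
        rw [show 2 * 0 + 1 = 2 * 0 + 1 from rfl, s_two_mul_add_one, s_zero]
        omega
      · have := IH k (by omega) hk1
        subst hk
        rw [s_two_mul_add_one, pow_succ]
        omega

lemma centralBinom_le_four_pow (m : ℕ) : Nat.centralBinom m ≤ 4 ^ m :=
  le_trans (Nat.choose_le_choose m (by omega : 2 * m ≤ 2 * m + 1)) (Nat.choose_middle_le_pow m)

lemma P_even_upper (m : ℕ) : P (2 * m) ≤ P m * 4 ^ m := by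
  have key := P_two_mul m
  have h1 : P (2 * m) ≤ P (2 * m) * 2 ^ s m :=
    le_mul_of_one_le_right (P_pos _).le (one_le_pow₀ one_le_two)
  calc P (2 * m) ≤ P (2 * m) * 2 ^ s m := h1
    _ = P m * (Nat.centralBinom m : ℚ) := key
    _ ≤ P m * 4 ^ m := by
        have : (Nat.centralBinom m : ℚ) ≤ (4 : ℚ) ^ m := by
          exact_mod_cast centralBinom_le_four_pow m
        exact mul_le_mul_of_nonneg_left this (P_pos m).le

lemma P_even_lower (m : ℕ) (hm : 1 ≤ m) :
    P m * 4 ^ m ≤ P (2 * m) * (2 * (m : ℚ)) ^ 2 := by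
  have key := P_two_mul m
  have hsq : (2 : ℚ) ^ s m ≤ 2 * (m : ℚ) := by exact_mod_cast two_pow_s_le m hm
  have hcb : (4 : ℚ) ^ m ≤ 2 * (m : ℚ) * (Nat.centralBinom m : ℚ) := by
    exact_mod_cast Nat.four_pow_le_two_mul_self_mul_centralBinom m hm
  calc P m * 4 ^ m ≤ P m * (2 * (m : ℚ) * (Nat.centralBinom m : ℚ)) :=
        mul_le_mul_of_nonneg_left hcb (P_pos m).le
    _ = (P m * (Nat.centralBinom m : ℚ)) * (2 * (m : ℚ)) := by ring
    _ = (P (2 * m) * 2 ^ s m) * (2 * (m : ℚ)) := by rw [key]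
    _ ≤ (P (2 * m) * (2 * (m : ℚ))) * (2 * (m : ℚ)) := by
        have h2m : (0 : ℚ) ≤ 2 * (m : ℚ) := by positivity
        exact mul_le_mul_of_nonneg_right
          (mul_le_mul_of_nonneg_left hsq (P_pos _).le) h2m
    _ = P (2 * m) * (2 * (m : ℚ)) ^ 2 := by ring


lemma P_one : P 1 = 1 := by
  have : f 1 = 1 := by have := f_odd 0; norm_num at this; simpa using this
  rw [show (1:ℕ) = 0 + 1 from rfl, P_succ, P_zero, this]; norm_num

lemma P_bounds : ∀ n : ℕ, 1 ≤ n →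
    (4 : ℚ) ^ n ≤ P n * ((n : ℚ) + 1) ^ (3 * (Nat.log 2 n + 1)) ∧
      P n ≤ 4 ^ n * ((n : ℚ) + 1) ^ (3 * (Nat.log 2 n + 1)) := by
  intro n
  induction n using Nat.strong_induction_on with
  | _ n IH =>
    intro hn
    rcases eq_or_lt_of_le hn with h1 | h2
    · rw [← h1]
      norm_num [P_one, Nat.log]
    · -- n ≥ 2
      have hmlt : n / 2 < n := Nat.div_lt_self (by omega) one_lt_two
      have hm1 : 1 ≤ n / 2 := by omega
      obtain ⟨IHl, IHu⟩ := IH (n / 2) hmlt hm1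
      set m := n / 2 with hmdef
      have hlogn : Nat.log 2 n = Nat.log 2 m + 1 := by
        have h1 := Nat.log_div_base 2 n
        rw [← hmdef] at h1
        have h2 := Nat.log_pos one_lt_two (show 2 ≤ n by omega)
        omega
      set L := Nat.log 2 m + 1 with hL
      have hexp : 3 * (Nat.log 2 n + 1) = 3 * L + 3 := by omega
      have hM1 : (1 : ℚ) ≤ (m : ℚ) + 1 := by
        have : (0:ℚ) ≤ (m:ℚ) := by positivity
        linarith
      have hMB : (m : ℚ) + 1 ≤ (n : ℚ) + 1 := by
        have : (m : ℚ) ≤ (n : ℚ) := by exact_mod_cast hmlt.le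
        linarith
      have hB1 : (1 : ℚ) ≤ (n : ℚ) + 1 := le_trans hM1 hMB
      have hPm := P_pos m
      have hP2m := P_pos (2 * m)
      have hup := P_even_upper m
      have hlo := P_even_lower m hm1
      have h2mB : 2 * (m : ℚ) ≤ (n : ℚ) + 1 := by
        have : (2 * m : ℕ) ≤ n := by omega
        have : ((2 * m : ℕ) : ℚ) ≤ (n : ℚ) := by exact_mod_cast this
        push_cast at this
        linarith
      rw [hexp]
      rcases (show n = 2 * m ∨ n = 2 * m + 1 by omega) with hcase | hcase
      · -- even case
        constructor
        · calc (4 : ℚ) ^ n = 4 ^ m * 4 ^ m := by rw [hcase, two_mul, pow_add]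
            _ ≤ (P m * ((m : ℚ) + 1) ^ (3 * L)) * 4 ^ m := by gcongr
            _ = (P m * 4 ^ m) * ((m : ℚ) + 1) ^ (3 * L) := by ring
            _ ≤ (P (2 * m) * (2 * (m : ℚ)) ^ 2) * ((m : ℚ) + 1) ^ (3 * L) := by gcongr
            _ ≤ (P (2 * m) * ((n : ℚ) + 1) ^ 2) * ((n : ℚ) + 1) ^ (3 * L) := by
                gcongr <;> first | exact hB1 | omega | positivity | exact hMB | exact h2mB | exact mul_nonneg (P_pos _).le (by positivity) | linarith
            _ = P (2 * m) * (((n : ℚ) + 1) ^ (3 * L + 2)) := by rw [pow_add]; ring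
            _ ≤ P (2 * m) * (((n : ℚ) + 1) ^ (3 * L + 3)) := by
                gcongr <;> first | exact hB1 | omega | positivity | exact hMB | exact h2mB | exact mul_nonneg (P_pos _).le (by positivity) | linarith
            _ = P n * ((n : ℚ) + 1) ^ (3 * L + 3) := by rw [hcase]
        · calc P n = P (2 * m) := by rw [hcase]
            _ ≤ P m * 4 ^ m := hup
            _ ≤ (4 ^ m * ((m : ℚ) + 1) ^ (3 * L)) * 4 ^ m := by gcongr
            _ = 4 ^ n * ((m : ℚ) + 1) ^ (3 * L) := by rw [hcase, two_mul, pow_add]; ring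
            _ ≤ 4 ^ n * ((n : ℚ) + 1) ^ (3 * L + 3) := by
                apply mul_le_mul_of_nonneg_left _ (by positivity)
                calc ((m : ℚ) + 1) ^ (3 * L) ≤ ((n : ℚ) + 1) ^ (3 * L) := by gcongr
                  _ ≤ ((n : ℚ) + 1) ^ (3 * L + 3) := by gcongr <;> first | exact hB1 | omega | positivity | exact hMB | exact h2mB | exact mul_nonneg (P_pos _).le (by positivity) | linarith
      · -- odd case
        have hPodd : P n = P (2 * m) * ((n : ℚ)) := by
          rw [hcase, P_succ, f_odd]
          push_cast
          ring
        have hnpos : (0 : ℚ) < (n : ℚ) := by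
          have : (0:ℕ) < n := by omega
          exact_mod_cast this
        have hP2mlePn : P (2 * m) ≤ P n := by
          rw [hPodd]
          nlinarith [hP2m, (show (1:ℚ) ≤ (n:ℚ) by exact_mod_cast hn)]
        constructor
        · have hkey : 4 * (2 * (m:ℚ)) ^ 2 ≤ ((n : ℚ) + 1) ^ 3 := by
            have hc : (n : ℚ) = 2 * (m : ℚ) + 1 := by
              rw [hcase]; push_cast; ring
            rw [hc]
            nlinarith [(show (1:ℚ) ≤ (m:ℚ) by exact_mod_cast hm1)]
          calc (4 : ℚ) ^ n = 4 * (4 ^ m * 4 ^ m) := by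
                rw [hcase, pow_succ, two_mul, pow_add]; ring
            _ ≤ 4 * ((P m * ((m : ℚ) + 1) ^ (3 * L)) * 4 ^ m) := by gcongr
            _ = 4 * ((P m * 4 ^ m) * ((m : ℚ) + 1) ^ (3 * L)) := by ring
            _ ≤ 4 * ((P (2 * m) * (2 * (m : ℚ)) ^ 2) * ((m : ℚ) + 1) ^ (3 * L)) := by gcongr
            _ ≤ 4 * ((P n * (2 * (m : ℚ)) ^ 2) * ((n : ℚ) + 1) ^ (3 * L)) := by
                have hPn := P_pos n
                gcongr <;> first | exact hP2mlePn | exact hMB | positivity | exact mul_nonneg hPn.le (by positivity)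
            _ = (P n * ((n : ℚ) + 1) ^ (3 * L)) * (4 * (2 * (m : ℚ)) ^ 2) := by ring
            _ ≤ (P n * ((n : ℚ) + 1) ^ (3 * L)) * ((n : ℚ) + 1) ^ 3 := by
                apply mul_le_mul_of_nonneg_left hkey
                exact mul_nonneg (P_pos n).le (by positivity)
            _ = P n * ((n : ℚ) + 1) ^ (3 * L + 3) := by rw [pow_add]; ring
        · have hkey : (n : ℚ) * ((m : ℚ) + 1) ^ (3 * L) ≤ 4 * ((n : ℚ) + 1) ^ (3 * L + 3) := by
            calc (n : ℚ) * ((m : ℚ) + 1) ^ (3 * L) ≤ ((n:ℚ)+1) * ((n : ℚ) + 1) ^ (3 * L) := by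
                  gcongr
                  linarith
              _ = ((n : ℚ) + 1) ^ (3 * L + 1) := by rw [pow_succ]; ring
              _ ≤ ((n : ℚ) + 1) ^ (3 * L + 3) := by gcongr <;> first | exact hB1 | omega | positivity | exact hMB | exact h2mB | exact mul_nonneg (P_pos _).le (by positivity) | linarith
              _ ≤ 4 * ((n : ℚ) + 1) ^ (3 * L + 3) := by nlinarith [pow_pos (show (0:ℚ) < (n:ℚ)+1 by linarith) (3*L+3)]
          calc P n = P (2 * m) * (n : ℚ) := hPodd
            _ ≤ (P m * 4 ^ m) * (n : ℚ) := by gcongr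
            _ ≤ ((4 ^ m * ((m : ℚ) + 1) ^ (3 * L)) * 4 ^ m) * (n : ℚ) := by gcongr
            _ = (4 ^ m * 4 ^ m) * ((n : ℚ) * ((m : ℚ) + 1) ^ (3 * L)) := by ring
            _ ≤ (4 ^ m * 4 ^ m) * (4 * ((n : ℚ) + 1) ^ (3 * L + 3)) := by gcongr
            _ = 4 ^ n * ((n : ℚ) + 1) ^ (3 * L + 3) := by
                rw [hcase, pow_succ, two_mul, pow_add]; ring

noncomputable def pr (n : ℕ) : ℝ := ((P n : ℚ) : ℝ)

lemma pr_pos (n : ℕ) : 0 < pr n := by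
  have := P_pos n
  unfold pr
  exact_mod_cast this

def E (n : ℕ) : ℕ := 3 * (Nat.log 2 n + 1)

lemma pr_lower (n : ℕ) (hn : 1 ≤ n) : (4 : ℝ) ^ n ≤ pr n * ((n : ℝ) + 1) ^ E n := by
  have h := (P_bounds n hn).1
  have h2 : ((4 : ℚ) ^ n : ℚ) ≤ ((P n * ((n : ℚ) + 1) ^ (3 * (Nat.log 2 n + 1)) : ℚ)) := h
  have := (Rat.cast_le (K := ℝ)).mpr h2
  push_cast at this
  unfold pr E
  push_cast
  convert this using 2

lemma pr_upper (n : ℕ) (hn : 1 ≤ n) : pr n ≤ (4 : ℝ) ^ n * ((n : ℝ) + 1) ^ E n := by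
  have h := (P_bounds n hn).2
  have := (Rat.cast_le (K := ℝ)).mpr h
  push_cast at this
  unfold pr E
  push_cast
  convert this using 2

lemma E_le (n : ℕ) (hn : 1 ≤ n) : (E n : ℝ) ≤ 6 * Real.log ((n : ℝ) + 1) + 3 := by
  have hlog2 : (Nat.log 2 n : ℝ) ≤ 2 * Real.log ((n : ℝ) + 1) := by
    have h1 : (2 : ℕ) ^ Nat.log 2 n ≤ n := Nat.pow_log_le_self 2 (by omega)
    have h2 : ((2 : ℝ)) ^ Nat.log 2 n ≤ (n : ℝ) := by exact_mod_cast h1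
    have h3 : Real.log ((2 : ℝ) ^ Nat.log 2 n) ≤ Real.log ((n : ℝ) + 1) :=
      Real.log_le_log (by positivity) (by linarith)
    rw [Real.log_pow] at h3
    have h4 : (0.5 : ℝ) < Real.log 2 := by
      have := Real.log_two_gt_d9
      linarith
    nlinarith [Nat.cast_nonneg (α := ℝ) (Nat.log 2 n)]
  have : (E n : ℝ) = 3 * ((Nat.log 2 n : ℝ) + 1) := by unfold E; push_cast; ring
  rw [this]
  linarith

lemma tendsto_aux :
    Filter.Tendsto (fun n : ℕ => ((6 * Real.log ((n : ℝ) + 1) + 3) * Real.log ((n : ℝ) + 1)) / n)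
      Filter.atTop (nhds 0) := by
  have h2 : Filter.Tendsto (fun x : ℝ => Real.log x ^ 2 / x) Filter.atTop (nhds 0) := by
    simpa using Real.tendsto_pow_log_div_mul_add_atTop 1 0 2 one_ne_zero
  have h1 : Filter.Tendsto (fun x : ℝ => Real.log x / x) Filter.atTop (nhds 0) := by
    simpa using Real.tendsto_pow_log_div_mul_add_atTop 1 0 1 one_ne_zero
  have hd : Filter.Tendsto (fun x : ℝ => (6 * Real.log x ^ 2 + 3 * Real.log x) / x)
      Filter.atTop (nhds 0) := by
    have := ((h2.const_mul 6).add (h1.const_mul 3))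
    simp only [mul_zero, add_zero] at this
    convert this using 2 with x
    ring
  have hshift : Filter.Tendsto (fun n : ℕ => (n : ℝ) + 1) Filter.atTop Filter.atTop :=
    Filter.tendsto_atTop_add_const_right _ _ tendsto_natCast_atTop_atTop
  have hcomp := hd.comp hshift
  have hq : Filter.Tendsto (fun n : ℕ => ((n : ℝ) + 1) / n) Filter.atTop (nhds 1) := by
    have h0 : Filter.Tendsto (fun n : ℕ => 1 + 1 / (n : ℝ)) Filter.atTop (nhds 1) := by
      have := tendsto_one_div_atTop_nhds_zero_nat (𝕜 := ℝ)
      have h := (tendsto_const_nhds (x := (1:ℝ)) (f := Filter.atTop (α := ℕ))).add this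
      simpa using h
    apply h0.congr'
    filter_upwards [Filter.eventually_ge_atTop 1] with n hn
    have hn0 : (n : ℝ) ≠ 0 := by positivity
    field_simp
  have := hcomp.mul hq
  simp only [mul_zero, zero_mul] at this
  apply this.congr'
  filter_upwards [Filter.eventually_ge_atTop 1] with n hn
  have hn0 : (n : ℝ) ≠ 0 := by
    have : (0:ℕ) < n := hn
    positivity
  have hn1 : ((n : ℝ) + 1) ≠ 0 := by positivity
  simp only [Function.comp]
  field_simp

lemma c_tendsto :
    Filter.Tendsto (fun n : ℕ => (E n : ℝ) * Real.log ((n : ℝ) + 1) / n)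
      Filter.atTop (nhds 0) := by
  apply tendsto_of_tendsto_of_tendsto_of_le_of_le' tendsto_const_nhds tendsto_aux
  · filter_upwards [Filter.eventually_ge_atTop 1] with n hn
    have hn0 : (0:ℝ) < n := by exact_mod_cast hn
    have hL0 : (0:ℝ) ≤ Real.log ((n : ℝ) + 1) := Real.log_nonneg (by linarith)
    positivity
  · filter_upwards [Filter.eventually_ge_atTop 1] with n hn
    have hn0 : (0:ℝ) < n := by exact_mod_cast hn
    have hL0 : (0:ℝ) ≤ Real.log ((n : ℝ) + 1) := Real.log_nonneg (by
      have : (1:ℝ) ≤ n := by exact_mod_cast hn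
      linarith)
    apply (div_le_div_iff_of_pos_right hn0).mpr
    exact mul_le_mul_of_nonneg_right (E_le n hn) hL0

lemma a_tendsto :
    Filter.Tendsto (fun n : ℕ => Real.log (pr n) / n) Filter.atTop (nhds (Real.log 4)) := by
  have hc := c_tendsto
  have hlow : Filter.Tendsto (fun n : ℕ => Real.log 4 - (E n : ℝ) * Real.log ((n : ℝ) + 1) / n)
      Filter.atTop (nhds (Real.log 4)) := by
    have := (tendsto_const_nhds (x := Real.log 4) (f := Filter.atTop (α := ℕ))).sub hc
    simpa using this
  have hhigh : Filter.Tendsto (fun n : ℕ => Real.log 4 + (E n : ℝ) * Real.log ((n : ℝ) + 1) / n)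
      Filter.atTop (nhds (Real.log 4)) := by
    have := (tendsto_const_nhds (x := Real.log 4) (f := Filter.atTop (α := ℕ))).add hc
    simpa using this
  apply tendsto_of_tendsto_of_tendsto_of_le_of_le' hlow hhigh
  · filter_upwards [Filter.eventually_ge_atTop 1] with n hn
    have hn0 : (0:ℝ) < n := by exact_mod_cast hn
    have hl := Real.log_le_log (by positivity) (pr_lower n hn)
    rw [Real.log_pow, Real.log_mul (pr_pos n).ne' (by positivity), Real.log_pow] at hl
    have key : (n : ℝ) * Real.log 4 - (E n : ℝ) * Real.log ((n : ℝ) + 1) ≤ Real.log (pr n) := by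
      push_cast at hl ⊢
      linarith
    calc Real.log 4 - (E n : ℝ) * Real.log ((n : ℝ) + 1) / n
        = ((n : ℝ) * Real.log 4 - (E n : ℝ) * Real.log ((n : ℝ) + 1)) / n := by
          field_simp
      _ ≤ Real.log (pr n) / n := (div_le_div_iff_of_pos_right hn0).mpr key
  · filter_upwards [Filter.eventually_ge_atTop 1] with n hn
    have hn0 : (0:ℝ) < n := by exact_mod_cast hn
    have hu := Real.log_le_log (pr_pos n) (pr_upper n hn)
    rw [Real.log_mul (by positivity) (by positivity), Real.log_pow, Real.log_pow] at hu
    have key : Real.log (pr n) ≤ (n : ℝ) * Real.log 4 + (E n : ℝ) * Real.log ((n : ℝ) + 1) := by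
      push_cast at hu ⊢
      linarith
    calc Real.log (pr n) / n ≤ ((n : ℝ) * Real.log 4 + (E n : ℝ) * Real.log ((n : ℝ) + 1)) / n :=
          (div_le_div_iff_of_pos_right hn0).mpr key
      _ = Real.log 4 + (E n : ℝ) * Real.log ((n : ℝ) + 1) / n := by field_simp

lemma main_tendsto :
    Filter.Tendsto (fun n : ℕ => pr n ^ ((n : ℝ)⁻¹)) Filter.atTop (nhds 4) := by
  have h := (Real.continuous_exp.tendsto (Real.log 4)).comp a_tendsto
  rw [Real.exp_log (by norm_num : (0:ℝ) < 4)] at h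
  apply h.congr'
  filter_upwards [Filter.eventually_ge_atTop 1] with n hn
  show Real.exp (Real.log (pr n) / n) = pr n ^ ((n : ℝ)⁻¹)
  rw [Real.rpow_def_of_pos (pr_pos n), div_eq_mul_inv]

end Four


theorem prod_f_pow_inv_tendsto_four :
    Filter.Tendsto (fun n : ℕ => ((∏ r ∈ Finset.Icc 1 n, f r : ℚ) : ℝ) ^ ((n : ℝ)⁻¹))
      Filter.atTop (nhds 4) :=
  Four.main_tendsto
end

section
/- For every positive integer n and every odd prime p, ∑_{r=1}^{n} v₂(r)·v_p(r) ≤ ∑_{r=1}^{n} v_p(r) − ⌊log n / log p⌋, where ⌊log n / log p⌋ is the largest exponent α with p^α ≤ n. -/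
open Finset

private lemma digits_two_sum_pos {M : ℕ} (hM : 0 < M) : 0 < (Nat.digits 2 M).sum := by
  have hne : Nat.digits 2 M ≠ [] := Nat.digits_ne_nil_iff_ne_zero.mpr hM.ne'
  have hlast := Nat.getLast_digit_ne_zero 2 hM.ne'
  have hmem : (Nat.digits 2 M).getLast hne ∈ Nat.digits 2 M := List.getLast_mem hne
  have := List.single_le_sum (fun x (_ : x ∈ Nat.digits 2 M) => Nat.zero_le x) _ hmem
  omega

private lemma v2_factorial_le {M : ℕ} (hM : 0 < M) :
    padicValNat 2 (Nat.factorial M) ≤ M - 1 := by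
  haveI : Fact (Nat.Prime 2) := ⟨Nat.prime_two⟩
  have h := sub_one_mul_padicValNat_factorial (p := 2) M
  have hd := digits_two_sum_pos hM
  omega

private lemma sum_padic_Icc (q : ℕ) [Fact q.Prime] (M : ℕ) :
    ∑ r ∈ Icc 1 M, padicValNat q r = padicValNat q (Nat.factorial M) := by
  induction M with
  | zero => simp
  | succ M ih =>
    rw [Finset.sum_Icc_succ_top (by omega), ih, Nat.factorial_succ,
      padicValNat.mul (by omega) (Nat.factorial_ne_zero M), add_comm]

private lemma sum_multiples (g : ℕ → ℕ) (n d : ℕ) (hd : 0 < d) :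
    ∑ r ∈ (Icc 1 n).filter (d ∣ ·), g r = ∑ m ∈ Icc 1 (n / d), g (d * m) := by
  refine Finset.sum_nbij' (fun r => r / d) (fun m => d * m) ?_ ?_ ?_ ?_ ?_
  · intro r hr
    simp only [mem_filter, mem_Icc] at hr ⊢
    obtain ⟨⟨h1, h2⟩, hdvd⟩ := hr
    constructor
    · have : d ≤ r := Nat.le_of_dvd (by omega) hdvd
      exact Nat.one_le_div_iff hd |>.mpr this
    · exact Nat.div_le_div_right h2
  · intro m hm
    simp only [mem_Icc] at hm
    simp only [mem_filter, mem_Icc]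
    refine ⟨⟨by nlinarith [hm.1], ?_⟩, Dvd.intro m rfl⟩
    calc d * m = m * d := mul_comm d m
    _ ≤ n := (Nat.le_div_iff_mul_le hd).mp hm.2
  · intro r hr
    simp only [mem_filter] at hr
    exact Nat.mul_div_cancel' hr.2
  · intro m _
    exact Nat.mul_div_cancel_left m hd
  · intro r hr
    simp only [mem_filter] at hr
    rw [Nat.mul_div_cancel' hr.2]

private lemma vp_eq_sum_ind (p : ℕ) (hp : p.Prime) {n r : ℕ} (h1 : 1 ≤ r) (h2 : r ≤ n) :
    padicValNat p r = ∑ j ∈ Icc 1 (Nat.log p n), if p ^ j ∣ r then 1 else 0 := by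
  set v := padicValNat p r with hv
  have hvle : v ≤ Nat.log p n := by
    apply Nat.le_log_of_pow_le hp.one_lt
    calc p ^ v ≤ r := Nat.le_of_dvd (by omega) pow_padicValNat_dvd
    _ ≤ n := h2
  have hdvd : ∀ j : ℕ, p ^ j ∣ r ↔ j ≤ v := by
    intro j
    rw [hv, ← Nat.factorization_def r hp, Nat.Prime.pow_dvd_iff_le_factorization hp (by omega)]
  calc v = (Icc 1 v).card := by simp
  _ = ((Icc 1 (Nat.log p n)).filter (fun j => p ^ j ∣ r)).card := by
      congr 1
      ext j
      simp only [mem_filter, mem_Icc, hdvd j]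
      omega
  _ = ∑ j ∈ Icc 1 (Nat.log p n), if p ^ j ∣ r then 1 else 0 := by
      rw [Finset.card_filter]

theorem sum_v2_mul_vp_le (n p : ℕ) (hn : 0 < n) (hp : p.Prime) (hodd : Odd p) :
    (∑ r ∈ Finset.Icc 1 n, ((padicValNat 2 r : ℤ) * (padicValNat p r : ℤ)))
      ≤ (∑ r ∈ Finset.Icc 1 n, (padicValNat p r : ℤ)) - (Nat.log p n : ℤ) := by
  haveI : Fact (Nat.Prime 2) := ⟨Nat.prime_two⟩
  haveI : Fact p.Prime := ⟨hp⟩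
  set L := Nat.log p n with hL
  -- each j ∈ [1, L] satisfies p ^ j ≤ n
  have hpow_le : ∀ j ∈ Icc 1 L, p ^ j ≤ n := by
    intro j hj
    simp only [mem_Icc] at hj
    calc p ^ j ≤ p ^ L := Nat.pow_le_pow_right hp.pos hj.2
    _ ≤ n := Nat.pow_log_le_self p hn.ne'
  have hdivpos : ∀ j ∈ Icc 1 L, 1 ≤ n / p ^ j := fun j hj =>
    (Nat.one_le_div_iff (pow_pos hp.pos j)).mpr (hpow_le j hj)
  -- v2 is invariant under multiplication by p ^ j
  have hv2inv : ∀ (j m : ℕ), 1 ≤ m → padicValNat 2 (p ^ j * m) = padicValNat 2 m := by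
    intro j m hm
    have hpj : ¬ (2 ∣ p ^ j) := by
      have : Odd (p ^ j) := hodd.pow
      rw [Nat.odd_iff] at this
      omega
    rw [padicValNat.mul (pow_ne_zero j hp.pos.ne') (by omega),
      padicValNat.eq_zero_of_not_dvd hpj, zero_add]
  -- LHS in ℕ
  have keyA : ∀ j ∈ Icc 1 L,
      (∑ r ∈ Icc 1 n, if p ^ j ∣ r then padicValNat 2 r else 0)
        = padicValNat 2 (Nat.factorial (n / p ^ j)) := by
    intro j hj
    rw [← Finset.sum_filter,
      sum_multiples (padicValNat 2) n (p ^ j) (pow_pos hp.pos j)]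
    rw [← sum_padic_Icc 2 (n / p ^ j)]
    refine Finset.sum_congr rfl fun m hm => ?_
    simp only [mem_Icc] at hm
    exact hv2inv j m hm.1
  have keyB : (∑ r ∈ Icc 1 n, padicValNat 2 r * padicValNat p r)
      = ∑ j ∈ Icc 1 L, padicValNat 2 (Nat.factorial (n / p ^ j)) := by
    calc ∑ r ∈ Icc 1 n, padicValNat 2 r * padicValNat p r
        = ∑ r ∈ Icc 1 n, ∑ j ∈ Icc 1 L, (if p ^ j ∣ r then padicValNat 2 r else 0) := by
          refine Finset.sum_congr rfl fun r hr => ?_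
          simp only [mem_Icc] at hr
          rw [vp_eq_sum_ind p hp hr.1 hr.2, Finset.mul_sum]
          exact Finset.sum_congr rfl fun j _ => by split <;> simp
    _ = ∑ j ∈ Icc 1 L, ∑ r ∈ Icc 1 n, (if p ^ j ∣ r then padicValNat 2 r else 0) :=
          Finset.sum_comm
    _ = ∑ j ∈ Icc 1 L, padicValNat 2 (Nat.factorial (n / p ^ j)) :=
          Finset.sum_congr rfl keyA
  -- RHS in ℕ
  have keyC : (∑ r ∈ Icc 1 n, padicValNat p r) = ∑ j ∈ Icc 1 L, n / p ^ j := by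
    rw [sum_padic_Icc p n, padicValNat_factorial (Nat.lt_succ_self L),
      ← Finset.Ico_add_one_right_eq_Icc]
    rfl
  -- now put everything together over ℤ
  have cast_lhs : (∑ r ∈ Finset.Icc 1 n, ((padicValNat 2 r : ℤ) * (padicValNat p r : ℤ)))
      = ((∑ r ∈ Icc 1 n, padicValNat 2 r * padicValNat p r : ℕ) : ℤ) := by push_cast; rfl
  have cast_rhs : (∑ r ∈ Finset.Icc 1 n, (padicValNat p r : ℤ))
      = ((∑ r ∈ Icc 1 n, padicValNat p r : ℕ) : ℤ) := by push_cast; rfl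
  rw [cast_lhs, cast_rhs, keyB, keyC, Nat.cast_sum, Nat.cast_sum]
  have hstep : ∀ j ∈ Icc 1 L, (padicValNat 2 (Nat.factorial (n / p ^ j)) : ℤ) ≤ (n / p ^ j : ℕ) - 1 := by
    intro j hj
    have h1 := hdivpos j hj
    have h2 := v2_factorial_le (M := n / p ^ j) (by omega)
    have : ((padicValNat 2 (Nat.factorial (n / p ^ j)) : ℕ) : ℤ) ≤ ((n / p ^ j - 1 : ℕ) : ℤ) :=
      Int.ofNat_le.mpr h2
    omega
  calc (∑ j ∈ Icc 1 L, (padicValNat 2 (Nat.factorial (n / p ^ j)) : ℤ))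
      ≤ ∑ j ∈ Icc 1 L, ((n / p ^ j : ℕ) - 1 : ℤ) := Finset.sum_le_sum hstep
  _ = (∑ j ∈ Icc 1 L, ((n / p ^ j : ℕ) : ℤ)) - L := by
      rw [Finset.sum_sub_distrib]
      simp [Nat.card_Icc]
end

section
/- Let n be a positive integer with binary representation n = a₀ + a₁·2 + a₂·2² + ⋯ + a_s·2^s (each a_i ∈ {0,1}). Then ∑_{r=1}^{n} v₂(r)(3 − v₂(r))/2 = ∑_{i=1}^{s} i·a_i; in particular, for every natural number m, ∑_{r=1}^{2^m} v₂(r)(3 − v₂(r))/2 = m. -/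
open Finset

private def gg (k : ℕ) : ℤ := ((k : ℤ) * (3 - (k : ℤ))) / 2

private lemma gg_succ (k : ℕ) : gg (k + 1) = gg k + 1 - (k : ℤ) := by
  unfold gg
  have h : ((k + 1 : ℕ) : ℤ) * (3 - ((k + 1 : ℕ) : ℤ))
      = (k : ℤ) * (3 - (k : ℤ)) + (1 - (k : ℤ)) * 2 := by push_cast; ring
  rw [h, Int.add_mul_ediv_right _ _ (by norm_num : (2:ℤ) ≠ 0)]
  ring

private def Bn : ℕ → ℕ
  | 0 => 0
  | (n+1) => Bn ((n+1)/2) + (n+1) % 2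
  decreasing_by exact Nat.div_lt_self (Nat.succ_pos n) one_lt_two

private lemma Bn_rec (n : ℕ) : Bn n = Bn (n/2) + n % 2 := by
  cases n with
  | zero => simp [Bn]
  | succ k => rw [Bn]

private def Fs (n : ℕ) : ℤ := ∑ r ∈ Icc 1 n, gg (padicValNat 2 r)
private def Vs (n : ℕ) : ℤ := ∑ r ∈ Icc 1 n, (padicValNat 2 r : ℤ)

private lemma sum_split (h : ℕ → ℤ) (h0 : ∀ r, r % 2 = 1 → h r = 0) (n : ℕ) :
    ∑ r ∈ Icc 1 n, h r = ∑ t ∈ Icc 1 (n / 2), h (2 * t) := by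
  induction n with
  | zero => simp
  | succ k ih =>
    rw [Finset.sum_Icc_succ_top (by omega) h, ih]
    rcases Nat.even_or_odd (k+1) with he | ho
    · obtain ⟨t, ht⟩ := he
      have h1 : (k+1)/2 = k/2 + 1 := by omega
      rw [h1, Finset.sum_Icc_succ_top (by omega)]
      have h2 : 2 * (k/2 + 1) = k + 1 := by omega
      rw [h2]
    · have h1 : (k+1)/2 = k/2 := by
        obtain ⟨t, ht⟩ := ho; omega
      have h2 : h (k+1) = 0 := h0 _ (by obtain ⟨t, ht⟩ := ho; omega)
      rw [h1, h2, add_zero]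

private lemma v_two_mul (t : ℕ) (ht : t ≠ 0) :
    padicValNat 2 (2 * t) = padicValNat 2 t + 1 := by
  rw [padicValNat.mul (by norm_num) ht]
  simp [padicValNat.self]
  omega

private lemma v_odd_s19 (r : ℕ) (hr : r % 2 = 1) : padicValNat 2 r = 0 :=
  padicValNat.eq_zero_of_not_dvd (by omega)

private lemma Vs_rec (n : ℕ) : Vs n = Vs (n/2) + (n/2 : ℕ) := by
  unfold Vs
  rw [sum_split _ (fun r hr => by rw [v_odd_s19 r hr]; norm_num)]
  rw [Finset.sum_congr rfl (fun t htm => by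
    rw [v_two_mul t (by simp at htm; omega)])]
  push_cast
  rw [Finset.sum_add_distrib]
  simp [Nat.card_Icc]

private lemma Fs_rec (n : ℕ) : Fs n = Fs (n/2) + (n/2 : ℕ) - Vs (n/2) := by
  unfold Fs
  unfold Vs
  rw [sum_split _ (fun r hr => by rw [v_odd_s19 r hr]; simp [gg]) n,
    Finset.sum_congr rfl (fun t htm => by
      rw [v_two_mul t (by simp at htm; omega), gg_succ]),
    Finset.sum_sub_distrib, Finset.sum_add_distrib]
  simp [Nat.card_Icc]

private lemma Vs_eq (n : ℕ) : Vs n = (n : ℤ) - (Bn n : ℤ) := by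
  induction n using Nat.strong_induction_on with
  | _ n ih =>
    cases n with
    | zero => simp [Vs, Bn]
    | succ k =>
      have h1 := Vs_rec (k+1)
      have h2 := ih ((k+1)/2) (Nat.div_lt_self (Nat.succ_pos k) one_lt_two)
      have h3 := Bn_rec (k+1)
      omega

private lemma Fs_rec2 (n : ℕ) : Fs n = Fs (n/2) + (Bn (n/2) : ℤ) := by
  have h1 := Fs_rec n
  have h2 := Vs_eq (n/2)
  rw [h1, h2]; ring

private lemma Bn_digits : ∀ (t : ℕ) (b : ℕ → ℕ), (∀ i, b i ≤ 1) →
    Bn (∑ i ∈ range t, b i * 2 ^ i) = ∑ i ∈ range t, b i := by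
  intro t
  induction t with
  | zero => intro b hb; simp [Bn]
  | succ t ih =>
    intro b hb
    have hs : ∑ i ∈ range (t+1), b i * 2 ^ i
        = 2 * (∑ i ∈ range t, b (i+1) * 2 ^ i) + b 0 := by
      rw [Finset.sum_range_succ' (fun i => b i * 2 ^ i) t, Finset.mul_sum]
      congr 1
      · exact Finset.sum_congr rfl (fun i _ => by ring)
      · simp
    rw [hs, Bn_rec]
    have hb0 := hb 0
    have hd : (2 * (∑ i ∈ range t, b (i+1) * 2 ^ i) + b 0) / 2
        = ∑ i ∈ range t, b (i+1) * 2 ^ i := by omega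
    have hm : (2 * (∑ i ∈ range t, b (i+1) * 2 ^ i) + b 0) % 2 = b 0 := by omega
    rw [hd, hm, ih (fun i => b (i+1)) (fun i => hb (i+1)),
      Finset.sum_range_succ' b t]

private lemma main_range : ∀ (s : ℕ) (n : ℕ) (a : ℕ → ℕ), (∀ i, a i ≤ 1) →
    n = ∑ i ∈ range (s+1), a i * 2 ^ i →
    Fs n = ∑ i ∈ range (s+1), (i : ℤ) * (a i : ℤ) := by
  intro s
  induction s with
  | zero =>
    intro n a ha hrep
    simp at hrep
    have : n ≤ 1 := hrep ▸ ha 0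
    interval_cases n
    · simp [Fs]
    · simp [Fs, padicValNat.one, gg]
  | succ s ih =>
    intro n a ha hrep
    have hs : n = 2 * (∑ i ∈ range (s+1), a (i+1) * 2 ^ i) + a 0 := by
      rw [hrep, Finset.sum_range_succ' (fun i => a i * 2 ^ i) (s+1), Finset.mul_sum]
      congr 1
      · exact Finset.sum_congr rfl (fun i _ => by ring)
      · simp
    have hb0 := ha 0
    have hd : n / 2 = ∑ i ∈ range (s+1), a (i+1) * 2 ^ i := by omega
    rw [Fs_rec2, hd, ih _ (fun i => a (i+1)) (fun i => ha (i+1)) rfl,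
      Bn_digits (s+1) (fun i => a (i+1)) (fun i => ha (i+1)),
      Finset.sum_range_succ' (fun i => (i : ℤ) * (a i : ℤ)) (s+1)]
    push_cast
    simp only [zero_mul, add_zero, ← Finset.sum_add_distrib]
    exact Finset.sum_congr rfl (fun i _ => by push_cast; ring)

theorem sum_v2_three_sub_v2_div_two (n s : ℕ) (a : ℕ → ℕ) (hn : 0 < n)
    (ha : ∀ i, a i ≤ 1) (hrep : n = ∑ i ∈ Finset.range (s + 1), a i * 2 ^ i) :
    (∑ r ∈ Finset.Icc 1 n,
        ((padicValNat 2 r : ℤ) * (3 - (padicValNat 2 r : ℤ))) / 2)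
      = ∑ i ∈ Finset.Icc 1 s, (i : ℤ) * (a i : ℤ) ∧
    ∀ m : ℕ, (∑ r ∈ Finset.Icc 1 (2 ^ m),
        ((padicValNat 2 r : ℤ) * (3 - (padicValNat 2 r : ℤ))) / 2) = (m : ℤ) := by
  have key : ∀ (s' n' : ℕ) (a' : ℕ → ℕ), (∀ i, a' i ≤ 1) →
      n' = ∑ i ∈ range (s'+1), a' i * 2 ^ i →
      (∑ r ∈ Finset.Icc 1 n',
        ((padicValNat 2 r : ℤ) * (3 - (padicValNat 2 r : ℤ))) / 2)
        = ∑ i ∈ Finset.Icc 1 s', (i : ℤ) * (a' i : ℤ) := by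
    intro s' n' a' ha' hrep'
    have h1 : range (s'+1) = insert 0 (Icc 1 s') := by
      ext i; simp; omega
    have h2 := main_range s' n' a' ha' hrep'
    rw [h1, Finset.sum_insert (by simp)] at h2
    simpa [Fs, gg] using h2
  constructor
  · exact key s n a ha hrep
  · intro m
    have hrep2 : 2 ^ m = ∑ i ∈ range (m+1), (if i = m then 1 else 0) * 2 ^ i := by
      simp only [ite_mul, one_mul, zero_mul]
      rw [Finset.sum_ite_eq' (range (m+1)) m (fun i => 2 ^ i)]
      simp
    have h5 := key m (2^m) (fun i => if i = m then 1 else 0)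
      (fun i => by split_ifs <;> omega) hrep2
    rw [h5]
    show ∑ i ∈ Icc 1 m, (i : ℤ) * (((if i = m then 1 else 0 : ℕ)) : ℤ) = (m : ℤ)
    rcases Nat.eq_zero_or_pos m with hm | hm
    · subst hm; simp
    · rw [Finset.sum_eq_single m (fun i _ hne => by simp [hne])
        (fun h => absurd (by simp; omega : m ∈ Icc 1 m) h)]
      simp
end
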